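/- arXiv:1502.01875 — 10 statements merged into one kernel-verified Lean document; each statement's English description precedes it below -/
import Mathlib

section
/- For natural numbers p, q, r, s with p ≤ min(q, r, s) and p ≤ s, we have ∑_{i=0}^{p} (-1)^{q-i} C(r+1, i) C(s+1-i, p-i) = ∑_{i=0}^{p} (-1)^{q-i} C(r, i) C(s-i, p-i). -/
/-- Lemma (Theta1): For natural numbers `p ≤ min(q,r,s)`,
`∑_{i=0}^{p} (-1)^{q-i} C(r+1,i) C(s+1-i,p-i) = ∑_{i=0}^{p} (-1)^{q-i} C(r,i) C(s-i,p-i)`. -/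
theorem theta_shift (p q r s : ℕ) (hq : p ≤ q) (hr : p ≤ r) (hs : p ≤ s) :
    ∑ i ∈ Finset.range (p + 1),
        (-1 : ℤ) ^ (q - i) * (r + 1).choose i * (s + 1 - i).choose (p - i)
      = ∑ i ∈ Finset.range (p + 1),
        (-1 : ℤ) ^ (q - i) * r.choose i * (s - i).choose (p - i) := by
  induction p generalizing s with
  | zero => simp
  | succ n ih =>
    obtain ⟨s', rfl⟩ : ∃ s', s = s' + 1 := ⟨s - 1, by omega⟩
    have hs' : n ≤ s' := by omega
    have IH := ih s' (by omega) (by omega) hs'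
    rw [Finset.sum_range_succ]
    conv_rhs => rw [Finset.sum_range_succ]
    have e2 : n + 1 - (n + 1) = 0 := by omega
    rw [e2]
    have hsplit :
        ∑ i ∈ Finset.range (n + 1),
            (-1 : ℤ) ^ (q - i) * (r + 1).choose i * (s' + 1 + 1 - i).choose (n + 1 - i)
          = (∑ i ∈ Finset.range (n + 1),
              (-1 : ℤ) ^ (q - i) * (r + 1).choose i * (s' + 1 - i).choose (n + 1 - i))
            + ∑ i ∈ Finset.range (n + 1),
              (-1 : ℤ) ^ (q - i) * (r + 1).choose i * (s' + 1 - i).choose (n - i) := by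
      rw [← Finset.sum_add_distrib]
      apply Finset.sum_congr rfl
      intro i hi
      have hi' : i ≤ n := by simpa [Nat.lt_succ_iff] using hi
      rw [show s' + 1 + 1 - i = (s' + 1 - i) + 1 by omega,
        show n + 1 - i = (n - i) + 1 by omega, Nat.choose_succ_succ]
      push_cast
      ring
    rw [hsplit, IH]
    -- peel first term of the two remaining "big" sums
    rw [Finset.sum_range_succ' (fun i =>
      (-1 : ℤ) ^ (q - i) * (r + 1).choose i * (s' + 1 - i).choose (n + 1 - i)),
      Finset.sum_range_succ' (fun i =>
      (-1 : ℤ) ^ (q - i) * r.choose i * (s' + 1 - i).choose (n + 1 - i))]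
    have hA : ∀ i ∈ Finset.range n,
        (-1 : ℤ) ^ (q - (i + 1)) * (r + 1).choose (i + 1) *
            (s' + 1 - (i + 1)).choose (n + 1 - (i + 1))
          = (-1 : ℤ) ^ (q - (i + 1)) * r.choose (i + 1) * (s' - i).choose (n - i)
            + (-1 : ℤ) ^ (q - (i + 1)) * r.choose i * (s' - i).choose (n - i) := by
      intro i hi
      rw [show s' + 1 - (i + 1) = s' - i by omega,
        show n + 1 - (i + 1) = n - i by omega, Nat.choose_succ_succ]
      push_cast
      ring
    rw [Finset.sum_congr rfl hA, Finset.sum_add_distrib]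
    -- peel last term of the IH-provided sum
    rw [show n + 1 = n + 1 from rfl]
    have hU :
        ∑ i ∈ Finset.range (n + 1), (-1 : ℤ) ^ (q - i) * r.choose i * (s' - i).choose (n - i)
          = (∑ i ∈ Finset.range n,
              (-1 : ℤ) ^ (q - i) * r.choose i * (s' - i).choose (n - i))
            + (-1 : ℤ) ^ (q - n) * r.choose n := by
      rw [Finset.sum_range_succ, show n - n = 0 by omega]
      simp
    rw [hU]
    -- the remaining alternating sums cancel termwise
    have hcancel :
        ∑ i ∈ Finset.range n,
            (-1 : ℤ) ^ (q - (i + 1)) * r.choose i * (s' - i).choose (n - i)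
          = - ∑ i ∈ Finset.range n,
              (-1 : ℤ) ^ (q - i) * r.choose i * (s' - i).choose (n - i) := by
      rw [← Finset.sum_neg_distrib]
      apply Finset.sum_congr rfl
      intro i hi
      have hi' : i < n := Finset.mem_range.mp hi
      have : q - i = (q - (i + 1)) + 1 := by omega
      rw [this]
      push_cast
      ring
    have hlast : ((-1 : ℤ)) ^ (q - n) = - (-1 : ℤ) ^ (q - (n + 1)) := by
      rw [show q - n = (q - (n + 1)) + 1 by omega]
      ring
    rw [Nat.choose_succ_succ r n, hcancel, hlast]
    simp only [Nat.choose_zero_right, Nat.succ_eq_add_one, Nat.cast_one, mul_one, Nat.sub_zero]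
    have hB : ∀ x ∈ Finset.range n,
        (-1 : ℤ) ^ (q - (x + 1)) * r.choose (x + 1) *
            ((s' + 1 - (x + 1)).choose (n + 1 - (x + 1)) : ℤ)
          = (-1 : ℤ) ^ (q - (x + 1)) * r.choose (x + 1) * (s' - x).choose (n - x) := by
      intro x hx
      rw [show s' + 1 - (x + 1) = s' - x by omega, show n + 1 - (x + 1) = n - x by omega]
    rw [Finset.sum_congr rfl hB]
    rw [Nat.cast_add]
    ring
end

section
/- For natural numbers k, l, m with l ≥ 1 and k < m ≤ k + l, we have ∑_{i=0}^{m} (-1)^{m-i} C(k+l, i) C(m+l-i-1, m-i) = 0. -/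
open PowerSeries

lemma coeff_one_sub_X_pow (n i : ℕ) :
    PowerSeries.coeff (R := ℤ) i ((1 - PowerSeries.X) ^ n) = (-1) ^ i * n.choose i := by
  have h1 : ((1 + PowerSeries.X : ℤ⟦X⟧)) ^ n =
      (((1 + Polynomial.X) ^ n : Polynomial ℤ) : ℤ⟦X⟧) := by
    rw [Polynomial.coe_pow, Polynomial.coe_add, Polynomial.coe_one, Polynomial.coe_X]
  have h2 : (1 - PowerSeries.X : ℤ⟦X⟧) ^ n = rescale (-1) ((1 + PowerSeries.X) ^ n) := by
    rw [map_pow, map_add, map_one, rescale_neg_one_X, ← sub_eq_add_neg]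
  rw [h2, coeff_rescale, h1, Polynomial.coeff_coe, Polynomial.coeff_one_add_X_pow]

/-- Lemma (Phi2): For natural numbers `k, l, m` with `l ≥ 1` and `k < m ≤ k + l`,
`∑_{i=0}^{m} (-1)^{m-i} C(k+l,i) C(m+l-i-1,m-i) = 0`. -/
theorem phi_eq_zero (k l m : ℕ) (hl : 1 ≤ l) (hkm : k < m) (hm : m ≤ k + l) :
    ∑ i ∈ Finset.range (m + 1),
        (-1 : ℤ) ^ (m - i) * (k + l).choose i * (m + l - i - 1).choose (m - i) = 0 := by
  have key : ((1 - PowerSeries.X : ℤ⟦X⟧) ^ (k + l)) * (invOneSubPow ℤ l).val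
      = (1 - PowerSeries.X) ^ k := by
    rw [pow_add, mul_assoc, ← invOneSubPow_inv_eq_one_sub_pow ℤ l, (invOneSubPow ℤ l).inv_val, mul_one]
  have hcoeff := congrArg (PowerSeries.coeff (R := ℤ) m) key
  rw [PowerSeries.coeff_mul, coeff_one_sub_X_pow,
    Nat.choose_eq_zero_of_lt hkm] at hcoeff
  rw [invOneSubPow_val_eq_mk_sub_one_add_choose_of_pos ℤ l hl] at hcoeff
  simp only [coeff_one_sub_X_pow, PowerSeries.coeff_mk, Nat.cast_ofNat, mul_zero,
    Nat.cast_zero] at hcoeff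
  rw [Finset.Nat.sum_antidiagonal_eq_sum_range_succ_mk] at hcoeff
  have step : ∑ i ∈ Finset.range (m + 1),
      (-1 : ℤ) ^ (m - i) * (k + l).choose i * (m + l - i - 1).choose (m - i)
      = (-1) ^ m * ∑ i ∈ Finset.range (m + 1),
        (-1 : ℤ) ^ i * (k + l).choose i * ((l - 1 + (m - i)).choose (l - 1)) := by
    rw [Finset.mul_sum]
    refine Finset.sum_congr rfl fun i hi => ?_
    have him : i ≤ m := by
      simp only [Finset.mem_range] at hi; omega
    have hsign : (-1 : ℤ) ^ (m - i) = (-1) ^ m * (-1) ^ i := by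
      have h1 : (-1 : ℤ) ^ (m - i) * ((-1) ^ i * (-1) ^ i) = (-1) ^ (m - i + (i + i)) := by
        rw [pow_add, pow_add]
      have h2 : ((-1 : ℤ)) ^ (i + i) = 1 := Even.neg_one_pow ⟨i, rfl⟩
      have h3 : (-1 : ℤ) ^ (m - i + (i + i)) = (-1) ^ m * (-1) ^ i := by
        rw [show m - i + (i + i) = m + i by omega, pow_add]
      calc (-1 : ℤ) ^ (m - i) = (-1) ^ (m - i) * (-1) ^ (i + i) := by rw [h2, mul_one]
        _ = (-1) ^ m * (-1) ^ i := by rw [← pow_add, h3]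
    have hch : (m + l - i - 1).choose (m - i) = (l - 1 + (m - i)).choose (l - 1) := by
      have hs := Nat.choose_symm (n := l - 1 + (m - i)) (k := l - 1) (Nat.le_add_right _ _)
      rw [show m + l - i - 1 = l - 1 + (m - i) by omega, ← hs]
      congr 1
      omega
    rw [hsign, hch]
    ring
  rw [step, hcoeff, mul_zero]
end

section
/- For natural numbers k, m, s with k ≥ 1 and m ≤ s < k + m, letting j = min(k, m), we have ∑_{i=0}^{j} (-1)^{k-i} C(m, i) C(s-i, k-i) = 0. -/
open Finset

private lemma psi_aux (m : ℕ) : ∀ k s : ℕ, m ≤ s →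
    ∑ i ∈ range (k + 1), (-1 : ℤ) ^ i * m.choose i * (s - i).choose (k - i)
      = (s - m).choose k := by
  induction m with
  | zero =>
    intro k s _
    rw [Finset.sum_eq_single 0]
    · simp
    · intro i _ hi
      rcases Nat.exists_eq_add_of_lt (Nat.pos_of_ne_zero hi) with ⟨j, rfl⟩
      simp [Nat.choose_eq_zero_of_lt]
    · simp
  | succ m ih =>
    intro k s hms
    match k with
    | 0 => simp
    | k + 1 =>
      have hms' : m ≤ s - 1 := by omega
      rw [Finset.sum_range_succ']
      have hsplit : ∀ i ∈ range (k + 1),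
          (-1 : ℤ) ^ (i+1) * ((m+1).choose (i+1)) * ((s-(i+1)).choose (k+1-(i+1))) =
          (-1 : ℤ) ^ (i+1) * (m.choose (i+1)) * ((s-(i+1)).choose (k+1-(i+1)))
          + (-(-1 : ℤ) ^ i * (m.choose i) * ((s-1-i).choose (k-i))) := by
        intro i _
        have h1 : s - (i+1) = s - 1 - i := by omega
        have h2 : k + 1 - (i+1) = k - i := by omega
        rw [Nat.choose_succ_succ, h1, h2]
        push_cast
        ring
      rw [Finset.sum_congr rfl hsplit, Finset.sum_add_distrib]
      have hA : (∑ i ∈ range (k+1),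
            (-1 : ℤ) ^ (i+1) * (m.choose (i+1)) * ((s-(i+1)).choose (k+1-(i+1))))
          + (-1 : ℤ) ^ 0 * ((m+1).choose 0) * ((s-0).choose (k+1-0))
          = (s - m).choose (k+1) := by
        have h := ih (k+1) s (le_trans (Nat.le_succ m) hms)
        rw [Finset.sum_range_succ'] at h
        simpa using h
      have hB : (∑ i ∈ range (k+1),
            (-(-1 : ℤ) ^ i * (m.choose i) * ((s-1-i).choose (k-i))))
          = -((s - 1 - m).choose k) := by
        rw [← neg_eq_iff_eq_neg, ← Finset.sum_neg_distrib]
        rw [← ih k (s-1) hms']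
        apply Finset.sum_congr rfl
        intro i _
        ring
      rw [add_right_comm, hA, hB]
      have h3 : s - m = (s - (m+1)) + 1 := by omega
      have h4 : s - 1 - m = s - (m+1) := by omega
      rw [h3, h4, Nat.choose_succ_succ]
      push_cast
      ring

/-- Lemma (Psi2): For natural numbers `k, m, s` with `k ≥ 1` and `m ≤ s < k + m`,
with `j = min(k,m)`, `∑_{i=0}^{j} (-1)^{k-i} C(m,i) C(s-i,k-i) = 0`. -/
theorem psi_zero (k m s : ℕ) (hk : 1 ≤ k) (hms : m ≤ s) (hs : s < k + m) :
    ∑ i ∈ Finset.range (min k m + 1),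
        (-1 : ℤ) ^ (k - i) * m.choose i * (s - i).choose (k - i) = 0 := by
  have hpad : ∑ i ∈ Finset.range (min k m + 1),
        (-1 : ℤ) ^ (k - i) * m.choose i * (s - i).choose (k - i)
      = ∑ i ∈ Finset.range (k + 1),
        (-1 : ℤ) ^ (k - i) * m.choose i * (s - i).choose (k - i) := by
    apply Finset.sum_subset
    · intro i hi
      simp only [Finset.mem_range] at *
      omega
    · intro i hi hni
      simp only [Finset.mem_range] at *
      have : m < i := by omega
      simp [Nat.choose_eq_zero_of_lt this]
  have hsign : ∑ i ∈ Finset.range (k + 1),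
        (-1 : ℤ) ^ (k - i) * m.choose i * (s - i).choose (k - i)
      = (-1 : ℤ) ^ k * ∑ i ∈ Finset.range (k + 1),
        (-1 : ℤ) ^ i * m.choose i * (s - i).choose (k - i) := by
    rw [Finset.mul_sum]
    apply Finset.sum_congr rfl
    intro i hi
    simp only [Finset.mem_range] at hi
    have hik : i ≤ k := by omega
    have : (-1 : ℤ) ^ (k - i) * (-1 : ℤ) ^ i = (-1 : ℤ) ^ k := by
      rw [← pow_add, Nat.sub_add_cancel hik]
    calc (-1 : ℤ) ^ (k - i) * m.choose i * (s - i).choose (k - i)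
        = ((-1:ℤ)^(k-i) * ((-1:ℤ)^i * (-1:ℤ)^i)) * (m.choose i) * ((s - i).choose (k - i)) := by
          have h2 : (-1:ℤ)^i * (-1:ℤ)^i = 1 := by
            rw [← pow_add, ← two_mul, pow_mul]; norm_num
          rw [h2, mul_one]
      _ = (-1:ℤ)^k * ((-1:ℤ)^i * m.choose i * (s - i).choose (k - i)) := by
          rw [← mul_assoc ((-1:ℤ)^(k-i)) _ _, this]; ring
  rw [hpad, hsign, psi_aux m k s hms,
    Nat.choose_eq_zero_of_lt (show s - m < k by omega)]
  simp
end

section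
/- For natural numbers m < |Z| ≤ n, one has ∑_{B ⊆ Z, |B| ≤ m} (-1)^{m-|B|} C(|Z|-|B|-1, m-|B|) = 1; more precisely, for a finite set Z with |Z| > m, the sum over all subsets B of Z of cardinality at most m of (-1)^{m-|B|} C(|Z|-|B|-1, m-|B|) equals 1. -/
open Finset

private lemma ring_choose_neg (s k : ℕ) :
    Ring.choose (-(s : ℤ)) k = (-1) ^ k * ((s + k - 1).choose k : ℤ) := by
  refine nsmul_right_injective (Nat.factorial_ne_zero k) ?_
  simp only
  rw [← Ring.descPochhammer_eq_factorial_smul_choose, ← Polynomial.eval_eq_smeval]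
  have h := ascPochhammer_eval_neg_eq_descPochhammer (R := ℤ) (-(s : ℤ)) k
  rw [neg_neg] at h
  have h2 : (descPochhammer ℤ k).eval (-(s : ℤ)) = (-1) ^ k * (ascPochhammer ℤ k).eval (s : ℤ) := by
    rw [h, ← mul_assoc, ← pow_add, ← two_mul, pow_mul]
    norm_num
  rw [h2]
  have h3 : (ascPochhammer ℤ k).eval ((s : ℤ)) = (s.ascFactorial k : ℤ) := by
    rw [← ascPochhammer_eval_cast]
    exact_mod_cast ascPochhammer_nat_eq_ascFactorial s k
  rw [h3, Nat.ascFactorial_eq_factorial_mul_choose']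
  push_cast
  ring

private lemma key_sum (n m : ℕ) (h : m < n) :
    ∑ k ∈ Finset.range (m + 1),
      (n.choose k : ℤ) * ((-1) ^ (m - k) * ((n - k - 1).choose (m - k) : ℤ)) = 1 := by
  have hV : (1 : ℤ) = ∑ i ∈ Finset.range (m + 1),
      Ring.choose ((m : ℤ) - n) i * Ring.choose ((n : ℤ)) (m - i) := by
    have h0 := Ring.add_choose_eq (R := ℤ) (r := (m : ℤ) - n) (s := (n : ℤ)) m (Commute.all _ _)
    rw [sub_add_cancel, Ring.choose_natCast, Nat.choose_self, Nat.cast_one,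
      Finset.Nat.sum_antidiagonal_eq_sum_range_succ_mk] at h0
    simpa using h0
  rw [← Finset.sum_range_reflect]
  refine Eq.trans (Finset.sum_congr rfl fun i hi => ?_) hV.symm
  rw [Finset.mem_range, Nat.lt_succ_iff] at hi
  have hmn : (m : ℤ) - n = -((n - m : ℕ) : ℤ) := by
    push_cast [Nat.cast_sub h.le]
    ring
  rw [hmn, ring_choose_neg, Ring.choose_natCast]
  have e0 : m + 1 - 1 - i = m - i := by omega
  rw [e0, Nat.sub_sub_self hi, (by omega : n - (m - i) - 1 = n - m + i - 1)]
  ring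

/-- For a finite set `Z` with `|Z| > m`, the sum over all subsets `B ⊆ Z` with `|B| ≤ m`
of `(-1)^{m-|B|} C(|Z|-|B|-1, m-|B|)` equals `1`. -/
theorem sum_over_small_subsets {α : Type*} [DecidableEq α] (m : ℕ) (Z : Finset α)
    (hZ : m < Z.card) :
    ∑ B ∈ Z.powerset.filter (fun B => B.card ≤ m),
        (-1 : ℤ) ^ (m - B.card) * (Z.card - B.card - 1).choose (m - B.card) = 1 := by
  set n := Z.card with hn
  rw [Finset.sum_filter]
  rw [Finset.powerset_card_biUnion, Finset.sum_biUnion (fun i _ j _ hij => Finset.pairwise_disjoint_powersetCard Z hij)]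
  have hstep : ∀ k ∈ Finset.range (n + 1),
      ∑ B ∈ Z.powersetCard k,
        (if B.card ≤ m then (-1 : ℤ) ^ (m - B.card) * ((n - B.card - 1).choose (m - B.card) : ℤ) else 0)
      = (n.choose k : ℤ) * (if k ≤ m then (-1 : ℤ) ^ (m - k) * ((n - k - 1).choose (m - k) : ℤ) else 0) := by
    intro k hk
    rw [Finset.sum_congr rfl (fun B hB => by
      rw [(Finset.mem_powersetCard.mp hB).2]), Finset.sum_const, Finset.card_powersetCard]
    simp [nsmul_eq_mul, ← hn]
  rw [Finset.sum_congr rfl hstep]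
  have hsub : ∑ k ∈ Finset.range (n + 1),
      (n.choose k : ℤ) * (if k ≤ m then (-1 : ℤ) ^ (m - k) * ((n - k - 1).choose (m - k) : ℤ) else 0)
      = ∑ k ∈ Finset.range (m + 1),
      (n.choose k : ℤ) * ((-1 : ℤ) ^ (m - k) * ((n - k - 1).choose (m - k) : ℤ)) := by
    rw [← Finset.sum_subset (Finset.range_subset_range.mpr (by omega : m + 1 ≤ n + 1))
        (fun k _ hk => by
          rw [Finset.mem_range, Nat.lt_succ_iff, not_le] at hk
          rw [if_neg (by omega), mul_zero])]
    refine Finset.sum_congr rfl fun k hk => ?_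
    rw [Finset.mem_range, Nat.lt_succ_iff] at hk
    rw [if_pos hk]
  rw [hsub]
  exact key_sum n m hZ
end

section
/- For a finite set Z with |Z| > m and any subset B ⊆ Z with |B| ≤ m, the sum over all C with B ⊆ C ⊆ Z and |C| ≤ m of (-1)^{m-|C|} C(|Z|-|C|-1, m-|C|) equals 1. -/
open Finset

lemma key (M : ℕ) : ∀ N : ℕ, M < N →
    ∑ j ∈ Finset.range (M+1), (-1:ℤ)^j * (N.choose j) * ((N-1-j).choose (M-j)) = (-1)^M := by
  induction M with
  | zero => intro N hN; simp
  | succ M ih =>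
    intro N hN
    obtain ⟨K, rfl⟩ : ∃ K, N = K + 1 := ⟨N-1, by omega⟩
    have hMK : M < K := by omega
    have hA : ∑ j ∈ Finset.range (M+2), (-1:ℤ)^j * (K.choose j) * ((K-j).choose (M+1-j)) = 0 := by
      have hc : ∀ j ∈ Finset.range (M+2),
          (-1:ℤ)^j * (K.choose j) * ((K-j).choose (M+1-j))
          = ((K.choose (M+1) : ℤ)) * ((-1:ℤ)^j * ((M+1).choose j)) := by
        intro j hj
        simp only [mem_range] at hj
        have h := (Nat.choose_mul (n := K) (show j ≤ M+1 by omega)).symm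
        have h2 : ((K.choose j * (K-j).choose (M+1-j) : ℕ) : ℤ)
            = ((K.choose (M+1) * (M+1).choose j : ℕ) : ℤ) := by rw [h]
        push_cast at h2
        linear_combination (-1:ℤ)^j * h2
      rw [Finset.sum_congr rfl hc, ← Finset.mul_sum,
        Int.alternating_sum_range_choose_of_ne (by omega : M + 1 ≠ 0), mul_zero]
    have hpeel := Finset.sum_range_succ' (fun j => (-1:ℤ)^j * ((K+1).choose j) * ((K+1-1-j).choose (M+1-j))) (M+1)
    rw [hpeel]
    have hterm : ∀ i ∈ Finset.range (M+1),
        (fun j => (-1:ℤ)^j * ((K+1).choose j) * ((K+1-1-j).choose (M+1-j))) (i+1)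
        = (-((-1:ℤ)^i * (K.choose i) * ((K-1-i).choose (M-i))))
          + (-1:ℤ)^(i+1) * (K.choose (i+1)) * ((K-(i+1)).choose (M+1-(i+1))) := by
      intro i hi
      simp only [mem_range] at hi
      simp only
      have h1 : K+1-1-(i+1) = K-1-i := by omega
      have h2 : M+1-(i+1) = M-i := by omega
      have h3 : K-(i+1) = K-1-i := by omega
      rw [h1, h3, Nat.choose_succ_succ, h2]
      push_cast
      ring
    rw [Finset.sum_congr rfl hterm, Finset.sum_add_distrib, Finset.sum_neg_distrib, ih K hMK]
    have hA' := Finset.sum_range_succ' (fun j => (-1:ℤ)^j * (K.choose j) * ((K-j).choose (M+1-j))) (M+1)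
    rw [hA] at hA'
    simp only [pow_zero, Nat.choose_zero_right, Nat.cast_one, one_mul, mul_one, Nat.sub_zero] at hA' ⊢
    rw [Nat.add_sub_cancel]
    linear_combination -hA'

/-- For a finite set `Z` with `|Z| > m` and `B ⊆ Z` with `|B| ≤ m`, the sum over all
`C` with `B ⊆ C ⊆ Z` and `|C| ≤ m` of `(-1)^{m-|C|} C(|Z|-|C|-1, m-|C|)` equals `1`. -/
theorem sum_over_intermediate_subsets {α : Type*} [DecidableEq α] (m : ℕ)
    (Z B : Finset α) (hZ : m < Z.card) (hBZ : B ⊆ Z) (hB : B.card ≤ m) :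
    ∑ C ∈ Z.powerset.filter (fun C => B ⊆ C ∧ C.card ≤ m),
        (-1 : ℤ) ^ (m - C.card) * (Z.card - C.card - 1).choose (m - C.card) = 1 := by
  set b := B.card with hb
  set n := Z.card with hn
  set M := m - b with hM
  set N := n - b with hN2
  have hNcard : (Z \ B).card = N := by rw [card_sdiff_of_subset hBZ]
  -- Step 1: reindex by D = C \ B
  have step1 : ∑ C ∈ Z.powerset.filter (fun C => B ⊆ C ∧ C.card ≤ m),
        (-1 : ℤ) ^ (m - C.card) * (Z.card - C.card - 1).choose (m - C.card)
      = ∑ D ∈ (Z \ B).powerset.filter (fun D => D.card ≤ M),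
        (-1 : ℤ) ^ (M - D.card) * ((N - D.card - 1).choose (M - D.card)) := by
    apply Finset.sum_nbij' (fun C => C \ B) (fun D => B ∪ D)
    · intro C hC
      simp only [mem_filter, mem_powerset] at hC ⊢
      obtain ⟨h1, h2, h3⟩ := hC
      have hcard : (C \ B).card = C.card - b := by rw [card_sdiff_of_subset h2]
      refine ⟨sdiff_subset_sdiff h1 le_rfl, ?_⟩
      rw [hcard]; omega
    · intro D hD
      simp only [mem_filter, mem_powerset] at hD ⊢
      obtain ⟨h1, h2⟩ := hD
      have hdisj : Disjoint B D := disjoint_sdiff.mono_right h1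
      have hcard : (B ∪ D).card = b + D.card := by
        rw [card_union_of_disjoint hdisj]
      refine ⟨union_subset hBZ (h1.trans sdiff_subset), subset_union_left, ?_⟩
      rw [hcard]; omega
    · intro C hC
      simp only [mem_filter, mem_powerset] at hC
      exact union_sdiff_of_subset hC.2.1
    · intro D hD
      simp only [mem_filter, mem_powerset] at hD
      have hdisj : Disjoint B D := disjoint_sdiff.mono_right hD.1
      exact union_sdiff_cancel_left hdisj
    · intro C hC
      simp only [mem_filter, mem_powerset] at hC
      obtain ⟨h1, h2, h3⟩ := hC
      have hbc : b ≤ C.card := card_le_card h2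
      have hcard : (C \ B).card = C.card - b := by rw [card_sdiff_of_subset h2]
      rw [hcard]
      have e1 : M - (C.card - b) = m - C.card := by omega
      have e2 : N - (C.card - b) - 1 = n - C.card - 1 := by omega
      rw [e1, e2]
  rw [step1]
  -- Step 2: split by cardinality
  have step2 : (Z \ B).powerset.filter (fun D => D.card ≤ M)
      = (Finset.range (M+1)).biUnion (fun j => (Z \ B).powersetCard j) := by
    ext D
    simp only [mem_filter, mem_powerset, mem_biUnion, mem_range, mem_powersetCard]
    constructor
    · rintro ⟨h1, h2⟩; exact ⟨D.card, by omega, h1, rfl⟩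
    · rintro ⟨j, hj, h1, rfl⟩; exact ⟨h1, by omega⟩
  rw [step2, Finset.sum_biUnion]
  · have inner : ∀ j ∈ Finset.range (M+1),
        ∑ D ∈ (Z \ B).powersetCard j,
          (-1 : ℤ) ^ (M - D.card) * ((N - D.card - 1).choose (M - D.card))
        = (N.choose j : ℤ) * ((-1 : ℤ) ^ (M - j) * ((N - 1 - j).choose (M - j))) := by
      intro j hj
      rw [Finset.sum_congr rfl (fun D hD => by
        rw [(mem_powersetCard.mp hD).2, show N - j - 1 = N - 1 - j from by omega])]
      rw [Finset.sum_const, Finset.card_powersetCard, hNcard, nsmul_eq_mul]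
    rw [Finset.sum_congr rfl inner]
    have hsum : ∑ j ∈ Finset.range (M+1),
        (N.choose j : ℤ) * ((-1 : ℤ) ^ (M - j) * ((N - 1 - j).choose (M - j)))
        = (-1:ℤ)^M * ∑ j ∈ Finset.range (M+1),
          (-1:ℤ)^j * (N.choose j) * ((N - 1 - j).choose (M - j)) := by
      rw [Finset.mul_sum]
      apply Finset.sum_congr rfl
      intro j hj
      simp only [mem_range] at hj
      have h4 : M - j + j = M := by omega
      have hjj : (-1:ℤ)^j * (-1:ℤ)^j = 1 := by
        rw [← pow_add, ← two_mul, pow_mul]; norm_num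
      have hpow : (-1:ℤ)^(M-j) = (-1:ℤ)^M * (-1:ℤ)^j := by
        calc (-1:ℤ)^(M-j) = (-1:ℤ)^(M-j) * ((-1:ℤ)^j * (-1:ℤ)^j) := by rw [hjj, mul_one]
          _ = (-1:ℤ)^(M-j+j) * (-1:ℤ)^j := by rw [← mul_assoc, ← pow_add]
          _ = (-1:ℤ)^M * (-1:ℤ)^j := by rw [h4]
      rw [hpow]; ring
    rw [hsum, key M N (by omega), ← pow_add, ← two_mul, pow_mul]
    norm_num
  · intro i hi j hj hij
    exact (Z \ B).pairwise_disjoint_powersetCard hij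
end

section
/- Let X be an uncountable set, n a natural number, and S a function from finite subsets of X to finite subsets of X. Then there exist distinct elements z_1, ..., z_n in X such that for every nonempty index set I ⊆ {1,...,n} and every j ∈ {1,...,n}, if j < min(I) or j > max(I), then z_j ∉ S({z_i : i ∈ I}). -/
open Set

section Aux

variable {X : Type*} [DecidableEq X]

/-- Iterated closure under `S`. -/
private def iterCl (S : Finset X → Finset X) (A : Set X) : ℕ → Set X
  | 0 => A
  | k + 1 => iterCl S A k ∪ ⋃ F ∈ {F : Finset X | ↑F ⊆ iterCl S A k}, (↑(S F) : Set X)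

/-- Closure of `A` under `S`. -/
private def scl (S : Finset X → Finset X) (A : Set X) : Set X :=
  ⋃ k, iterCl S A k

private lemma subset_scl (S : Finset X → Finset X) (A : Set X) : A ⊆ scl S A :=
  subset_iUnion (iterCl S A) 0

private lemma iterCl_le_scl (S : Finset X → Finset X) (A : Set X) (k : ℕ) :
    iterCl S A k ⊆ scl S A :=
  subset_iUnion _ k

private lemma iterCl_mono (S : Finset X → Finset X) (A : Set X) : Monotone (iterCl S A) :=
  monotone_nat_of_le_succ fun _ => subset_union_left

private lemma countable_finset_subset {A : Set X} (hA : A.Countable) :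
    {F : Finset X | ↑F ⊆ A}.Countable := by
  refine ((countable_setOf_finite_subset hA).preimage Finset.coe_injective).mono ?_
  intro F hF
  exact ⟨F.finite_toSet, hF⟩

private lemma scl_countable {S : Finset X → Finset X} {A : Set X} (hA : A.Countable) :
    (scl S A).Countable := by
  refine countable_iUnion fun k => ?_
  induction k with
  | zero => exact hA
  | succ k ih =>
    exact ih.union
      (Countable.biUnion (countable_finset_subset ih) fun F _ => (S F).countable_toSet)

private lemma exists_iterCl {S : Finset X → Finset X} {A : Set X} :
    ∀ F : Finset X, ↑F ⊆ scl S A → ∃ k, ↑F ⊆ iterCl S A k := by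
  intro F
  induction F using Finset.induction with
  | empty => exact fun _ => ⟨0, by simp⟩
  | @insert a F ha ih =>
    intro h
    have hFa : (↑F : Set X) ⊆ scl S A := fun x hx => h (by simp [hx])
    obtain ⟨k1, hk1⟩ := ih hFa
    obtain ⟨k2, hk2⟩ := mem_iUnion.mp (h (Finset.mem_coe.mpr (Finset.mem_insert_self a F)))
    refine ⟨max k1 k2, ?_⟩
    intro x hx
    simp only [Finset.coe_insert, Set.mem_insert_iff, Finset.mem_coe] at hx
    rcases hx with rfl | hxF
    · exact iterCl_mono S A (le_max_right k1 k2) hk2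
    · exact iterCl_mono S A (le_max_left k1 k2) (hk1 hxF)

private lemma scl_closed {S : Finset X → Finset X} {A : Set X} (F : Finset X)
    (h : ↑F ⊆ scl S A) : ↑(S F) ⊆ scl S A := by
  obtain ⟨k, hk⟩ := exists_iterCl F h
  refine subset_trans ?_ (iterCl_le_scl S A (k + 1))
  intro x hx
  exact Set.mem_union_right _ (mem_biUnion (show F ∈ {F : Finset X | ↑F ⊆ iterCl S A k} from hk) hx)

private lemma compl_infinite (hX : ¬ (univ : Set X).Countable) {A : Set X}
    (hA : A.Countable) : Aᶜ.Infinite := by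
  by_contra h
  rw [Set.not_infinite] at h
  have := hA.union h.countable
  rw [Set.union_compl_self] at this
  exact hX this

/-- A countably infinite set of fresh points outside the countable set `A`. -/
private noncomputable def freshOf (hX : ¬ (univ : Set X).Countable) (A : Set X)
    (hA : A.Countable) : Set X :=
  range fun m => ((Set.Infinite.natEmbedding _ (compl_infinite hX hA)) m : X)

private lemma freshOf_countable (hX : ¬ (univ : Set X).Countable) (A : Set X)
    (hA : A.Countable) : (freshOf hX A hA).Countable :=
  countable_range _

private lemma freshOf_infinite (hX : ¬ (univ : Set X).Countable) (A : Set X)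
    (hA : A.Countable) : (freshOf hX A hA).Infinite :=
  infinite_range_of_injective
    (Subtype.val_injective.comp (Set.Infinite.natEmbedding _ (compl_infinite hX hA)).injective)

private lemma freshOf_disjoint (hX : ¬ (univ : Set X).Countable) (A : Set X)
    (hA : A.Countable) : ∀ x ∈ freshOf hX A hA, x ∉ A := by
  rintro x ⟨m, rfl⟩
  exact ((Set.Infinite.natEmbedding _ (compl_infinite hX hA)) m).2

/-- The decreasing (in the picking order increasing) chain of countable `S`-closed sets. -/
private noncomputable def chainB (hX : ¬ (univ : Set X).Countable)
    (S : Finset X → Finset X) : ℕ → {A : Set X // A.Countable}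
  | 0 => ⟨scl S ∅, scl_countable countable_empty⟩
  | k + 1 =>
    ⟨scl S ((chainB hX S k).1 ∪ freshOf hX (chainB hX S k).1 (chainB hX S k).2),
     scl_countable ((chainB hX S k).2.union (freshOf_countable hX _ _))⟩

private noncomputable def freshC (hX : ¬ (univ : Set X).Countable)
    (S : Finset X → Finset X) (k : ℕ) : Set X :=
  freshOf hX (chainB hX S k).1 (chainB hX S k).2

private lemma chainB_closed (hX : ¬ (univ : Set X).Countable) (S : Finset X → Finset X)
    (k : ℕ) (F : Finset X) (h : ↑F ⊆ (chainB hX S k).1) : ↑(S F) ⊆ (chainB hX S k).1 := by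
  cases k with
  | zero => exact scl_closed F h
  | succ k => exact scl_closed F h

private lemma chainB_le_succ (hX : ¬ (univ : Set X).Countable) (S : Finset X → Finset X)
    (k : ℕ) : (chainB hX S k).1 ⊆ (chainB hX S (k + 1)).1 :=
  fun _ hx => subset_scl S _ (Or.inl hx)

private lemma chainB_mono (hX : ¬ (univ : Set X).Countable) (S : Finset X → Finset X)
    {a b : ℕ} (hab : a ≤ b) : (chainB hX S a).1 ⊆ (chainB hX S b).1 :=
  monotone_nat_of_le_succ (chainB_le_succ hX S) hab

private lemma freshC_subset_succ (hX : ¬ (univ : Set X).Countable) (S : Finset X → Finset X)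
    (k : ℕ) : freshC hX S k ⊆ (chainB hX S (k + 1)).1 :=
  fun _ hx => subset_scl S _ (Or.inr hx)

private lemma freshC_notMem (hX : ¬ (univ : Set X).Countable) (S : Finset X → Finset X)
    (k : ℕ) : ∀ x ∈ freshC hX S k, x ∉ (chainB hX S k).1 :=
  freshOf_disjoint hX _ _

/-- Everything that must be avoided because of subsets of `v`. -/
private def avoidSet (S : Finset X → Finset X) (v : Finset X) : Set X :=
  ⋃ F ∈ (↑v.powerset : Set (Finset X)), (↑(S F) : Set X)

private lemma avoidSet_finite (S : Finset X → Finset X) (v : Finset X) :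
    (avoidSet S v).Finite :=
  Set.Finite.biUnion v.powerset.finite_toSet fun F _ => (S F).finite_toSet

private lemma pick_nonempty (hX : ¬ (univ : Set X).Countable) (S : Finset X → Finset X)
    (k : ℕ) (v : Finset X) : (freshC hX S k \ avoidSet S v).Nonempty :=
  ((freshOf_infinite hX _ _).diff (avoidSet_finite S v)).nonempty

private noncomputable def pick (hX : ¬ (univ : Set X).Countable) (S : Finset X → Finset X)
    (k : ℕ) (v : Finset X) : X :=
  (pick_nonempty hX S k v).some

private lemma pick_spec (hX : ¬ (univ : Set X).Countable) (S : Finset X → Finset X)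
    (k : ℕ) (v : Finset X) : pick hX S k v ∈ freshC hX S k \ avoidSet S v :=
  (pick_nonempty hX S k v).some_mem

/-- The list of the first `m` chosen points. -/
private noncomputable def wlist (hX : ¬ (univ : Set X).Countable) (S : Finset X → Finset X)
    (n : ℕ) : ℕ → List X
  | 0 => []
  | m + 1 => wlist hX S n m ++ [pick hX S (n - 1 - m) (wlist hX S n m).toFinset]

/-- The `m`-th chosen point. -/
private noncomputable def w (hX : ¬ (univ : Set X).Countable) (S : Finset X → Finset X)
    (n m : ℕ) : X :=
  pick hX S (n - 1 - m) (wlist hX S n m).toFinset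

private lemma wlist_eq (hX : ¬ (univ : Set X).Countable) (S : Finset X → Finset X)
    (n m : ℕ) : wlist hX S n m = (List.range m).map (w hX S n) := by
  induction m with
  | zero => simp [wlist]
  | succ m ih => simp [wlist, List.range_succ, ih, w]

private lemma wlist_toFinset (hX : ¬ (univ : Set X).Countable) (S : Finset X → Finset X)
    (n m : ℕ) : (wlist hX S n m).toFinset = (Finset.range m).image (w hX S n) := by
  induction m with
  | zero => simp [wlist]
  | succ m ih =>
    show (wlist hX S n m ++ [w hX S n m]).toFinset = _
    rw [List.toFinset_append, ih]
    ext x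
    simp [Finset.range_add_one, or_comm]

private lemma w_mem_fresh (hX : ¬ (univ : Set X).Countable) (S : Finset X → Finset X)
    (n m : ℕ) : w hX S n m ∈ freshC hX S (n - 1 - m) :=
  (pick_spec hX S _ _).1

private lemma w_not_avoid (hX : ¬ (univ : Set X).Countable) (S : Finset X → Finset X)
    (n m : ℕ) (F : Finset X) (hF : F ⊆ (Finset.range m).image (w hX S n)) :
    w hX S n m ∉ S F := by
  intro hmem
  refine (pick_spec hX S (n - 1 - m) (wlist hX S n m).toFinset).2 ?_
  refine Set.mem_biUnion ?_ hmem
  simp only [Finset.coe_powerset, Set.mem_preimage, Set.mem_powerset_iff, Finset.coe_subset,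
    Finset.mem_coe, Finset.mem_powerset]
  rw [wlist_toFinset]
  exact hF

end Aux

/-- Lemma: Let `X` be an uncountable set, `n < ω`, and `S : [X]^{<ω} → [X]^{<ω}`.
Then there are distinct `z_1, …, z_n ∈ X` such that `z_j ∉ S({z_i : i ∈ I})`
whenever `j < min I` or `j > max I`. -/
theorem free_sequence_of_uncountable {X : Type*} [DecidableEq X]
    (hX : ¬ (Set.univ : Set X).Countable) (n : ℕ) (S : Finset X → Finset X) :
    ∃ z : Fin n → X, Function.Injective z ∧
      ∀ (I : Finset (Fin n)) (j : Fin n), I.Nonempty →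
        ((∀ i ∈ I, j < i) ∨ (∀ i ∈ I, i < j)) → z j ∉ S (I.image z) := by
  classical
  refine ⟨fun j => w hX S n j, ?_, ?_⟩
  · -- injectivity
    have hnmem : ∀ j : Fin n, w hX S n j ∉ (chainB hX S (n - 1 - (j : ℕ))).1 :=
      fun j => freshC_notMem hX S _ _ (w_mem_fresh hX S n j)
    have key : ∀ i j : Fin n, j < i → w hX S n i ∈ (chainB hX S (n - 1 - (j : ℕ))).1 := by
      intro i j hij
      refine chainB_mono hX S ?_ (freshC_subset_succ hX S _ (w_mem_fresh hX S n i))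
      have h1 : (i : ℕ) < n := i.isLt
      have h2 : (j : ℕ) < (i : ℕ) := hij
      omega
    intro a b hab
    have hab' : w hX S n (a : ℕ) = w hX S n (b : ℕ) := hab
    by_contra hne
    rcases lt_or_gt_of_ne hne with h | h
    · exact hnmem a (by rw [hab']; exact key b a h)
    · exact hnmem b (by rw [← hab']; exact key a b h)
  · intro I j _ hcase
    rcases hcase with hlt | hgt
    · -- all elements of I are above j: use the closed chain
      intro hmemS
      have hsub : ↑(I.image fun i : Fin n => w hX S n i) ⊆ (chainB hX S (n - 1 - (j : ℕ))).1 := by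
        intro x hx
        simp only [Finset.coe_image, Set.mem_image, Finset.mem_coe] at hx
        obtain ⟨i, hiI, rfl⟩ := hx
        refine chainB_mono hX S ?_ (freshC_subset_succ hX S _ (w_mem_fresh hX S n i))
        have h1 : (i : ℕ) < n := i.isLt
        have h2 : (j : ℕ) < (i : ℕ) := hlt i hiI
        omega
      exact freshC_notMem hX S _ _ (w_mem_fresh hX S n j)
        (chainB_closed hX S _ _ hsub hmemS)
    · -- all elements of I are below j: avoided at the choice of `w j`
      refine w_not_avoid hX S n j (I.image fun i : Fin n => w hX S n i) ?_
      intro x hx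
      obtain ⟨i, hiI, rfl⟩ := Finset.mem_image.mp hx
      exact Finset.mem_image.mpr ⟨i, Finset.mem_range.mpr (hgt i hiI), rfl⟩
end

section
/- Let m ≤ p be natural numbers, X a set of cardinality at least ℵ_{p-1}, and S a map from subsets of X of cardinality at most m to finite subsets of X such that S(A) ∩ A = ∅ for every such A. Then there exists a subset Y of X with |Y| = p such that S(A) ∩ Y = ∅ for every A ⊆ Y with |A| ≤ m. -/
private def unionS {X : Type*} [DecidableEq X] (m : ℕ) (S : Finset X → Finset X)
    (B : Finset X) : Finset X :=
  (B.powerset.filter (fun A => A.card ≤ m)).biUnion S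

lemma mem_unionS {X : Type*} [DecidableEq X] {m : ℕ} {S : Finset X → Finset X}
    {B A : Finset X} {y : X} (hsub : A ⊆ B) (hAm : A.card ≤ m) (hy : y ∈ S A) :
    y ∈ unionS m S B :=
  Finset.mem_biUnion.mpr ⟨A, Finset.mem_filter.mpr ⟨Finset.mem_powerset.mpr hsub, hAm⟩, hy⟩

/-- Lemma: let `m ≤ p`, `X` a set with `|X| ≥ ℵ_{p-1}`, and `S` a map from subsets of `X`
of cardinality at most `m` to finite subsets of `X` with `S(A) ∩ A = ∅`. Assuming the
Erdős–Hajnal free set lemma, there is `Y ∈ [X]^p` with `S(A) ∩ Y = ∅` for all `A ∈ [Y]^{≤ m}`. -/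
theorem exists_free_finset {X : Type*} [DecidableEq X] (m p : ℕ) (hmp : m ≤ p)
    (hX : Cardinal.aleph (p - 1) ≤ Cardinal.mk X)
    (freeSetLemma : ∀ (n : ℕ) (S' : Finset X → Finset X),
      Cardinal.aleph n ≤ Cardinal.mk X →
        ∃ A : Finset X, A.card = n + 1 ∧ ∀ a ∈ A, a ∉ S' (A.erase a))
    (S : Finset X → Finset X) (hS : ∀ A : Finset X, A.card ≤ m → Disjoint (S A) A) :
    ∃ Y : Finset X, Y.card = p ∧ ∀ A ⊆ Y, A.card ≤ m → Disjoint (S A) Y := by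
  rcases Nat.eq_zero_or_pos p with rfl | hp
  · exact ⟨∅, Finset.card_empty, fun A hA _ => Finset.disjoint_empty_right _⟩
  · have hX' : Cardinal.aleph ((p - 1 : ℕ) : Ordinal) ≤ Cardinal.mk X := by
      rw [Ordinal.natCast_sub, Nat.cast_one]; exact hX
    obtain ⟨Y, hYcard, hYfree⟩ := freeSetLemma (p - 1) (unionS m S) hX'
    rw [Nat.sub_add_cancel hp] at hYcard
    refine ⟨Y, hYcard, fun A hA hAm => ?_⟩
    rw [Finset.disjoint_right]
    intro y hyY hyS
    by_cases hyA : y ∈ A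
    · exact (Finset.disjoint_right.mp (hS A hAm) hyA) hyS
    · have hsub : A ⊆ Y.erase y := fun x hx =>
        Finset.mem_erase.mpr ⟨fun h => hyA (h ▸ hx), hA hx⟩
      exact hYfree y hyY (mem_unionS hsub hAm hyS)
end

section
/- For natural numbers m < n, the operator norm of the canonical extension operator T_X : C(σ_m(2^X)) → C(σ_n(2^X)), defined by T_X(f)(χ_A) = ∑_{B ⊆ A, |B| ≤ m} (-1)^{m-|B|} C(|A|-|B|-1, m-|B|) f(χ_B) for m < |A| ≤ n, equals ∑_{k=0}^{m} C(n,k) C(n-k-1, m-k), provided |X| ≥ n. -/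
/-- The characteristic function of a finite set, as an element of `{0,1}^X`. -/
def chi {X : Type*} [DecidableEq X] (A : Finset X) : X → Bool := fun x => decide (x ∈ A)

/-- `σ_n(2^X) = {χ_A : A ⊆ X, |A| ≤ n} ⊆ {0,1}^X`, with the product topology. -/
def sigmaSet (X : Type*) [DecidableEq X] (n : ℕ) : Set (X → Bool) :=
  {f | ∃ A : Finset X, A.card ≤ n ∧ f = chi A}

/-- The point `χ_A ∈ σ_n(2^X)` associated to a finite set `A` with `|A| ≤ n`. -/
def mkPt {X : Type*} [DecidableEq X] {n : ℕ} (A : Finset X) (h : A.card ≤ n) :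
    sigmaSet X n := ⟨chi A, A, h, rfl⟩

/-- Grouping a sum over bounded-card subsets by cardinality. -/
lemma group_sum {X : Type*} [DecidableEq X] (A : Finset X) (m : ℕ) (f : ℕ → ℝ) :
    ∑ B ∈ A.powerset.filter (fun B => B.card ≤ m), f B.card
      = ∑ k ∈ Finset.range (m + 1), (A.card.choose k : ℝ) * f k := by
  rw [← Finset.sum_fiberwise_of_maps_to (t := Finset.range (m + 1)) (g := Finset.card)
    (fun B hB => Finset.mem_range.mpr (Nat.lt_succ_of_le (Finset.mem_filter.mp hB).2))]
  refine Finset.sum_congr rfl fun k hk => ?_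
  have hk' : k ≤ m := Nat.lt_succ_iff.mp (Finset.mem_range.mp hk)
  have hfib : ((A.powerset.filter (fun B => B.card ≤ m)).filter (fun B => B.card = k))
      = A.powersetCard k := by
    rw [Finset.filter_filter, Finset.powersetCard_eq_filter]
    exact Finset.filter_congr fun B _ => by constructor <;> intro h <;> omega
  rw [hfib, Finset.sum_congr rfl (fun B hB => by
      rw [(Finset.mem_powersetCard.mp hB).2]),
    Finset.sum_const, Finset.card_powersetCard, nsmul_eq_mul]

/-- If `|X| ≥ n` and `m < n`, then the canonical extension operator
`T_X : C(σ_m(2^X)) → C(σ_n(2^X))`, determined by `T_X f(χ_A) = f(χ_A)` for `|A| ≤ m` and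
`T_X f(χ_A) = ∑_{B ⊆ A, |B| ≤ m} (-1)^{m-|B|} C(|A|-|B|-1, m-|B|) f(χ_B)` for `m < |A| ≤ n`,
has operator norm `∑_{k=0}^{m} C(n,k) C(n-k-1, m-k)`. -/
theorem norm_canonical_extension_operator {X : Type*} [DecidableEq X] (m n : ℕ) (hmn : m < n)
    (hX : (n : Cardinal) ≤ Cardinal.mk X)
    (T : BoundedContinuousFunction (sigmaSet X m) ℝ →L[ℝ]
          BoundedContinuousFunction (sigmaSet X n) ℝ)
    (hext : ∀ (f : BoundedContinuousFunction (sigmaSet X m) ℝ) (A : Finset X)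
      (hA : A.card ≤ m), T f (mkPt A (hA.trans hmn.le)) = f (mkPt A hA))
    (hform : ∀ (f : BoundedContinuousFunction (sigmaSet X m) ℝ) (A : Finset X)
      (hA : A.card ≤ n), m < A.card →
        T f (mkPt A hA) = ∑ B ∈ A.powerset.filter (fun B => B.card ≤ m),
          (-1 : ℝ) ^ (m - B.card) * ((A.card - B.card - 1).choose (m - B.card)) *
            (if h : B.card ≤ m then f (mkPt B h) else 0)) :
    ‖T‖ = ∑ k ∈ Finset.range (m + 1), (n.choose k : ℝ) * ((n - k - 1).choose (m - k)) := by
  set S : ℝ := ∑ k ∈ Finset.range (m + 1), (n.choose k : ℝ) * ((n - k - 1).choose (m - k))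
    with hSdef
  have hS0 : (0 : ℝ) ≤ S := by positivity
  have hS1 : (1 : ℝ) ≤ S := by
    have hterm : (1 : ℝ) ≤ (n.choose m : ℝ) * ((n - m - 1).choose (m - m)) := by
      rw [Nat.sub_self, Nat.choose_zero_right, Nat.cast_one, mul_one]
      exact_mod_cast Nat.one_le_iff_ne_zero.mpr (Nat.choose_pos hmn.le).ne'
    calc (1 : ℝ) ≤ (n.choose m : ℝ) * ((n - m - 1).choose (m - m)) := hterm
      _ ≤ S := Finset.single_le_sum (f := fun k => (n.choose k : ℝ) * ((n - k - 1).choose (m - k)))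
          (fun k _ => by positivity) (Finset.self_mem_range_succ m)
  apply le_antisymm
  · -- upper bound
    apply T.opNorm_le_bound hS0
    intro f
    rw [BoundedContinuousFunction.norm_le (by positivity)]
    intro x
    obtain ⟨A, hA, hxA⟩ := x.2
    have hx : x = mkPt A hA := Subtype.ext hxA
    by_cases hAm : A.card ≤ m
    · have h1 : (T f) x = f (mkPt A hAm) := by rw [hx]; exact hext f A hAm
      rw [h1]
      calc ‖f (mkPt A hAm)‖ ≤ ‖f‖ := f.norm_coe_le_norm _
        _ = 1 * ‖f‖ := (one_mul _).symm
        _ ≤ S * ‖f‖ := mul_le_mul_of_nonneg_right hS1 (norm_nonneg f)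
    · push_neg at hAm
      have h1 : (T f) x = ∑ B ∈ A.powerset.filter (fun B => B.card ≤ m),
          (-1 : ℝ) ^ (m - B.card) * ((A.card - B.card - 1).choose (m - B.card)) *
            (if h : B.card ≤ m then f (mkPt B h) else 0) := by
        rw [hx]; exact hform f A hA hAm
      rw [h1, Real.norm_eq_abs]
      calc |∑ B ∈ A.powerset.filter (fun B => B.card ≤ m),
              (-1 : ℝ) ^ (m - B.card) * ((A.card - B.card - 1).choose (m - B.card)) *
                (if h : B.card ≤ m then f (mkPt B h) else 0)|
          ≤ ∑ B ∈ A.powerset.filter (fun B => B.card ≤ m),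
              |(-1 : ℝ) ^ (m - B.card) * ((A.card - B.card - 1).choose (m - B.card)) *
                (if h : B.card ≤ m then f (mkPt B h) else 0)| :=
            Finset.abs_sum_le_sum_abs _ _
        _ ≤ ∑ B ∈ A.powerset.filter (fun B => B.card ≤ m),
              ((A.card - B.card - 1).choose (m - B.card) : ℝ) * ‖f‖ := by
            refine Finset.sum_le_sum fun B hB => ?_
            have hBm : B.card ≤ m := (Finset.mem_filter.mp hB).2
            rw [dif_pos hBm, abs_mul, abs_mul, abs_pow, abs_neg, abs_one, one_pow, one_mul,
              Nat.abs_cast]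
            exact mul_le_mul_of_nonneg_left
              ((Real.norm_eq_abs _ ▸ f.norm_coe_le_norm (mkPt B hBm)))
              (by positivity)
        _ = (∑ B ∈ A.powerset.filter (fun B => B.card ≤ m),
              ((A.card - B.card - 1).choose (m - B.card) : ℝ)) * ‖f‖ :=
            (Finset.sum_mul _ _ _).symm
        _ ≤ S * ‖f‖ := by
            refine mul_le_mul_of_nonneg_right ?_ (norm_nonneg f)
            rw [group_sum A m (fun k => ((A.card - k - 1).choose (m - k) : ℝ))]
            refine Finset.sum_le_sum fun k hk => ?_
            have : A.card.choose k * ((A.card - k - 1).choose (m - k))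
                ≤ n.choose k * ((n - k - 1).choose (m - k)) :=
              Nat.mul_le_mul (Nat.choose_le_choose _ hA)
                (Nat.choose_le_choose _ (by omega))
            exact_mod_cast this
  · -- lower bound
    obtain ⟨s, hs⟩ := Cardinal.exists_finset_le_card X n hX
    obtain ⟨A, -, hAcard⟩ := Finset.exists_subset_card_eq hs
    -- the test function
    set F : sigmaSet X m → ℝ :=
      fun g => (-1 : ℝ) ^ m * ∏ x ∈ A, (if g.1 x then (-1 : ℝ) else 1) with hFdef
    have hFcont : Continuous F := by
      refine continuous_const.mul (continuous_finset_prod _ fun x _ => ?_)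
      have h1 : Continuous fun g : sigmaSet X m => g.1 x :=
        (continuous_apply x).comp continuous_subtype_val
      exact (continuous_of_discreteTopology
        (f := fun b : Bool => if b then (-1 : ℝ) else 1)).comp h1
    have hFval : ∀ g, ‖F g‖ = 1 := by
      intro g
      rw [hFdef, Real.norm_eq_abs, abs_mul, abs_pow, abs_neg, abs_one, one_pow, one_mul,
        Finset.abs_prod]
      refine Finset.prod_eq_one fun x _ => ?_
      by_cases h : g.1 x <;> simp [h]
    set f : BoundedContinuousFunction (sigmaSet X m) ℝ :=
      BoundedContinuousFunction.ofNormedAddCommGroup F hFcont 1 (fun g => (hFval g).le)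
      with hfdef
    have hfnorm : ‖f‖ ≤ 1 :=
      BoundedContinuousFunction.norm_ofNormedAddCommGroup_le hFcont zero_le_one _
    have hfB : ∀ (B : Finset X) (hB : B.card ≤ m), B ⊆ A →
        f (mkPt B hB) = (-1 : ℝ) ^ m * (-1) ^ B.card := by
      intro B hB hBA
      show F (mkPt B hB) = _
      rw [hFdef]
      beta_reduce
      congr 1
      have : ∀ x ∈ A, (if (mkPt B hB : sigmaSet X m).1 x then (-1 : ℝ) else 1)
          = (if x ∈ B then (-1 : ℝ) else 1) := by
        intro x _
        simp [mkPt, chi]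
      rw [Finset.prod_congr rfl this, ← Finset.prod_filter, Finset.prod_const,
        Finset.filter_mem_eq_inter, Finset.inter_eq_right.mpr hBA]
    have hAn : A.card ≤ n := hAcard.le
    have hTf : (T f) (mkPt A hAn) = S := by
      rw [hform f A hAn (by omega)]
      have hterm : ∀ B ∈ A.powerset.filter (fun B => B.card ≤ m),
          (-1 : ℝ) ^ (m - B.card) * ((A.card - B.card - 1).choose (m - B.card)) *
            (if h : B.card ≤ m then f (mkPt B h) else 0)
          = ((A.card - B.card - 1).choose (m - B.card) : ℝ) := by
        intro B hB
        have hBA : B ⊆ A := Finset.mem_powerset.mp (Finset.mem_filter.mp hB).1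
        have hBm : B.card ≤ m := (Finset.mem_filter.mp hB).2
        rw [dif_pos hBm, hfB B hBm hBA]
        have h2 : (-1 : ℝ) ^ (m - B.card) * ((-1 : ℝ) ^ m * (-1) ^ B.card) = 1 := by
          rw [← pow_add, ← pow_add]
          have : m - B.card + (m + B.card) = 2 * m := by omega
          rw [this, pow_mul]
          norm_num
        calc (-1 : ℝ) ^ (m - B.card) * ((A.card - B.card - 1).choose (m - B.card)) *
              ((-1 : ℝ) ^ m * (-1) ^ B.card)
            = ((A.card - B.card - 1).choose (m - B.card) : ℝ) *
              ((-1 : ℝ) ^ (m - B.card) * ((-1 : ℝ) ^ m * (-1) ^ B.card)) := by ring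
          _ = _ := by rw [h2, mul_one]
      rw [Finset.sum_congr rfl hterm,
        group_sum A m (fun k => ((A.card - k - 1).choose (m - k) : ℝ)), hSdef, hAcard]
    calc S = (T f) (mkPt A hAn) := hTf.symm
      _ ≤ ‖(T f) (mkPt A hAn)‖ := le_abs_self _
      _ ≤ ‖T f‖ := (T f).norm_coe_le_norm _
      _ ≤ ‖T‖ * ‖f‖ := T.le_opNorm f
      _ ≤ ‖T‖ * 1 := mul_le_mul_of_nonneg_left hfnorm (norm_nonneg T)
      _ = ‖T‖ := mul_one _
end

section
/- Let X be a set, Y ⊆ X, and m < n natural numbers. Define e : C(σ_m(2^Y)) → C(σ_m(2^X)) by e(f)(χ_A) = f(χ_{A∩Y}) and r : C(σ_n(2^X)) → C(σ_n(2^Y)) by r(f)(χ_A) = f(χ_A) (restriction). If T : C(σ_m(2^X)) → C(σ_n(2^X)) is an extension operator, then T|_Y := r ∘ T ∘ e is an extension operator C(σ_m(2^Y)) → C(σ_n(2^Y)) with ‖T|_Y‖ ≤ ‖T‖. -/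
/-- Let `Y ⊆ X` and `m < n`. Given the embedding operator
`e : C(σ_m(2^Y)) → C(σ_m(2^X))`, `e(f)(χ_A) = f(χ_{A ∩ Y})`, the restriction operator
`r : C(σ_n(2^X)) → C(σ_n(2^Y))`, `r(f)(χ_A) = f(χ_A)`, and an extension operator
`T : C(σ_m(2^X)) → C(σ_n(2^X))`, the operator `T|_Y = r ∘ T ∘ e` is an extension
operator `C(σ_m(2^Y)) → C(σ_n(2^Y))` with `‖T|_Y‖ ≤ ‖T‖`. -/
theorem restricted_extension_operator {X : Type*} [DecidableEq X]
    (Y : Set X) [DecidablePred (· ∈ Y)] (m n : ℕ) (hmn : m < n)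
    (e : BoundedContinuousFunction (sigmaSet Y m) ℝ →L[ℝ]
          BoundedContinuousFunction (sigmaSet X m) ℝ)
    (he : ∀ (g : BoundedContinuousFunction (sigmaSet Y m) ℝ) (A : Finset X)
      (hA : A.card ≤ m),
        e g (mkPt A hA) = g (mkPt (A.subtype (· ∈ Y))
          (le_trans (by rw [Finset.card_subtype]; exact Finset.card_filter_le _ _) hA)))
    (r : BoundedContinuousFunction (sigmaSet X n) ℝ →L[ℝ]
          BoundedContinuousFunction (sigmaSet Y n) ℝ)
    (hr : ∀ (f : BoundedContinuousFunction (sigmaSet X n) ℝ) (B : Finset Y)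
      (hB : B.card ≤ n),
        r f (mkPt B hB) = f (mkPt (B.map (Function.Embedding.subtype (· ∈ Y)))
          (by rw [Finset.card_map]; exact hB)))
    (T : BoundedContinuousFunction (sigmaSet X m) ℝ →L[ℝ]
          BoundedContinuousFunction (sigmaSet X n) ℝ)
    (hT : ∀ (f : BoundedContinuousFunction (sigmaSet X m) ℝ) (A : Finset X)
      (hA : A.card ≤ m), T f (mkPt A (hA.trans hmn.le)) = f (mkPt A hA)) :
    (∀ (g : BoundedContinuousFunction (sigmaSet Y m) ℝ) (B : Finset Y)
      (hB : B.card ≤ m),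
        (r.comp (T.comp e)) g (mkPt B (hB.trans hmn.le)) = g (mkPt B hB)) ∧
    ‖r.comp (T.comp e)‖ ≤ ‖T‖ := by
  constructor
  · intro g B hB
    have hBm : (B.map (Function.Embedding.subtype (· ∈ Y))).card ≤ m := by
      rw [Finset.card_map]; exact hB
    rw [ContinuousLinearMap.comp_apply, ContinuousLinearMap.comp_apply,
      hr _ B (hB.trans hmn.le)]
    have h1 : mkPt (B.map (Function.Embedding.subtype (· ∈ Y)))
        (by rw [Finset.card_map]; exact hB.trans hmn.le) =
        mkPt (B.map (Function.Embedding.subtype (· ∈ Y))) (hBm.trans hmn.le) := rfl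
    rw [h1, hT _ _ hBm, he g _ hBm]
    have h2 : (B.map (Function.Embedding.subtype (· ∈ Y))).subtype (· ∈ Y) = B := by
      ext a
      simp [Finset.mem_subtype, Subtype.ext_iff]
    congr 1
    exact Subtype.ext (by simp [mkPt, h2])
  · refine ContinuousLinearMap.opNorm_le_bound _ (norm_nonneg T) fun g => ?_
    have hre : ∀ f : BoundedContinuousFunction (sigmaSet X n) ℝ, ‖r f‖ ≤ ‖f‖ := by
      intro f
      refine BoundedContinuousFunction.norm_le (norm_nonneg f) |>.mpr fun x => ?_
      obtain ⟨B, hB, hx⟩ := x.2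
      have : x = mkPt B hB := Subtype.ext hx
      rw [this, hr f B hB]
      exact BoundedContinuousFunction.norm_coe_le_norm f _
    have hee : ‖e g‖ ≤ ‖g‖ := by
      refine BoundedContinuousFunction.norm_le (norm_nonneg g) |>.mpr fun x => ?_
      obtain ⟨A, hA, hx⟩ := x.2
      have : x = mkPt A hA := Subtype.ext hx
      rw [this, he g A hA]
      exact BoundedContinuousFunction.norm_coe_le_norm g _
    calc ‖(r.comp (T.comp e)) g‖ = ‖r (T (e g))‖ := rfl
      _ ≤ ‖T (e g)‖ := hre _
      _ ≤ ‖T‖ * ‖e g‖ := T.le_opNorm _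
      _ ≤ ‖T‖ * ‖g‖ := by
          exact mul_le_mul_of_nonneg_left hee (norm_nonneg T)
end

section
/- For each natural number m ≥ 1, there exists a regular extension operator R : C(S_m) → C(B_1^+), i.e., a bounded linear operator of norm 1 which is positive, preserves constants, and satisfies R(f)|_{S_m} = f, where S_m ⊆ B_1^+ is the set of points whose coordinates take only the values 0 or 1/m, and B_1^+ = {z ∈ [0,∞)^X : ∑_i z_i ≤ 1} with the product topology, for X any set. -/
/-- `B_1^+ = {z ∈ [0,∞)^X : ∑_i z_i ≤ 1}`, with the product topology. -/
def Bplus (X : Type*) : Set (X → ℝ) :=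
  {z | (∀ i, 0 ≤ z i) ∧ ∀ s : Finset X, ∑ i ∈ s, z i ≤ 1}

/-- `S_m ⊆ B_1^+`: the set of points whose coordinates take only the values `0` or `1/m`,
i.e. `S_m = {m⁻¹ χ_A : A ⊆ X, |A| ≤ m}`. -/
def Sm (X : Type*) [DecidableEq X] (m : ℕ) : Set (X → ℝ) :=
  {z | ∃ A : Finset X, A.card ≤ m ∧ z = fun i => if i ∈ A then (m : ℝ)⁻¹ else 0}

noncomputable section Aux
open Finset

variable {X : Type*} [DecidableEq X]

/-- lower threshold -/
def aa (m : ℕ) : ℝ := ((m : ℝ)⁻¹ + ((m : ℝ) + 1)⁻¹) / 2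

/-- the ramp function -/
def gg (m : ℕ) (t : ℝ) : ℝ := max (min 1 ((t - aa m) / ((m : ℝ)⁻¹ - aa m))) 0

/-- the finite set of large coordinates -/
def Fz (m : ℕ) (z : X → ℝ) : Finset X :=
  open Classical in if h : Set.Finite {i | aa m < z i} then h.toFinset else ∅

/-- the point `m⁻¹ χ_A` -/
def pt (X : Type*) [DecidableEq X] (m : ℕ) (A : Finset X) : X → ℝ :=
  fun i => if i ∈ A then (m : ℝ)⁻¹ else 0

lemma pt_mem_Sm {m : ℕ} {A : Finset X} (h : A.card ≤ m) : pt X m A ∈ Sm X m :=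
  ⟨A, h, rfl⟩

/-- value of `f` at `m⁻¹ χ_A`, or `0` if `A` is too big -/
def vl (m : ℕ) (f : BoundedContinuousFunction (Sm X m) ℝ) (A : Finset X) : ℝ :=
  if h : A.card ≤ m then f ⟨pt X m A, pt_mem_Sm h⟩ else 0

/-- the weight of the subset `A ⊆ S` at `z` -/
def wt (m : ℕ) (S A : Finset X) (z : X → ℝ) : ℝ :=
  (∏ i ∈ A, gg m (z i)) * ∏ i ∈ S \ A, (1 - gg m (z i))

/-- the approximating sum over the powerset of `S` -/
def Phi (m : ℕ) (f : BoundedContinuousFunction (Sm X m) ℝ) (S : Finset X) (z : X → ℝ) : ℝ :=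
  ∑ A ∈ S.powerset, wt m S A z * vl m f A

/-- the extension operator, pointwise -/
def Rf (m : ℕ) (f : BoundedContinuousFunction (Sm X m) ℝ) (z : X → ℝ) : ℝ :=
  Phi m f (Fz m z) z

variable {m : ℕ}

section basic
variable (hm : 1 ≤ m)
include hm

lemma aa_pos : 0 < aa m := by
  have h0 : (0:ℝ) < (m:ℝ) := by exact_mod_cast hm
  have : (0:ℝ) < (m:ℝ)⁻¹ := by positivity
  have : (0:ℝ) < ((m:ℝ)+1)⁻¹ := by positivity
  unfold aa; linarith

lemma aa_lt_inv : aa m < (m : ℝ)⁻¹ := by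
  have h0 : (0:ℝ) < (m:ℝ) := by exact_mod_cast hm
  have h1 : ((m:ℝ)+1)⁻¹ < (m:ℝ)⁻¹ := by
    apply inv_strictAnti₀ h0; linarith
  unfold aa; linarith

lemma one_lt_succ_mul_aa : 1 < ((m : ℝ) + 1) * aa m := by
  have h0 : (0:ℝ) < (m:ℝ) := by exact_mod_cast hm
  have h1 : (0:ℝ) < (m:ℝ) + 1 := by linarith
  have e1 : ((m:ℝ)+1) * (m:ℝ)⁻¹ = 1 + (m:ℝ)⁻¹ := by field_simp
  have e2 : ((m:ℝ)+1) * ((m:ℝ)+1)⁻¹ = 1 := by field_simp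
  have h3 : (0:ℝ) < (m:ℝ)⁻¹ := by positivity
  unfold aa
  nlinarith [e1, e2, h3]

end basic

lemma gg_nonneg (t : ℝ) : 0 ≤ gg m t := le_max_right _ _

lemma gg_le_one (t : ℝ) : gg m t ≤ 1 := by
  unfold gg
  apply max_le (min_le_left _ _) zero_le_one

lemma gg_of_le (hm : 1 ≤ m) {t : ℝ} (ht : t ≤ aa m) : gg m t = 0 := by
  have hd : 0 < (m:ℝ)⁻¹ - aa m := by have := aa_lt_inv (m := m) hm; linarith
  have : (t - aa m) / ((m:ℝ)⁻¹ - aa m) ≤ 0 := by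
    apply div_nonpos_of_nonpos_of_nonneg <;> linarith
  unfold gg
  have : min 1 ((t - aa m) / ((m:ℝ)⁻¹ - aa m)) ≤ 0 := le_trans (min_le_right _ _) this
  exact max_eq_right this

lemma gg_of_ge (hm : 1 ≤ m) {t : ℝ} (ht : (m:ℝ)⁻¹ ≤ t) : gg m t = 1 := by
  have hd : 0 < (m:ℝ)⁻¹ - aa m := by have := aa_lt_inv (m := m) hm; linarith
  have h1 : (1:ℝ) ≤ (t - aa m) / ((m:ℝ)⁻¹ - aa m) := by
    rw [le_div_iff₀ hd]; linarith
  unfold gg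
  rw [min_eq_left h1, max_eq_left zero_le_one]

lemma gg_lip (hm : 1 ≤ m) (t s : ℝ) :
    |gg m t - gg m s| ≤ |t - s| / ((m:ℝ)⁻¹ - aa m) := by
  have hd : 0 < (m:ℝ)⁻¹ - aa m := by have := aa_lt_inv (m := m) hm; linarith
  unfold gg
  calc |max (min 1 ((t - aa m) / ((m : ℝ)⁻¹ - aa m))) 0 -
      max (min 1 ((s - aa m) / ((m : ℝ)⁻¹ - aa m))) 0|
      ≤ |min 1 ((t - aa m) / ((m : ℝ)⁻¹ - aa m)) - min 1 ((s - aa m) / ((m : ℝ)⁻¹ - aa m))| :=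
        abs_max_sub_max_le_abs _ _ _
    _ ≤ max |(1:ℝ) - 1| |(t - aa m) / ((m : ℝ)⁻¹ - aa m) - (s - aa m) / ((m : ℝ)⁻¹ - aa m)| :=
        abs_min_sub_min_le_max _ _ _ _
    _ ≤ |t - s| / ((m:ℝ)⁻¹ - aa m) := by
        rw [div_sub_div_same]
        apply max_le
        · simp; positivity
        · rw [abs_div, abs_of_pos hd]
          have : t - aa m - (s - aa m) = t - s := by ring
          rw [this]

/-- any finset of coordinates all exceeding `aa m` of a point of `Bplus` has at most `m` elts -/
lemma card_le_of_big (hm : 1 ≤ m) {z : X → ℝ} (hz : z ∈ Bplus X) (T : Finset X)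
    (hT : ∀ i ∈ T, aa m < z i) : T.card ≤ m := by
  by_contra h
  push_neg at h
  obtain ⟨T', hT'sub, hT'card⟩ := Finset.exists_subset_card_eq (show m + 1 ≤ T.card from h)
  have hne : T'.Nonempty := by
    rw [← Finset.card_pos, hT'card]; omega
  have h1 : ∑ _i ∈ T', aa m < ∑ i ∈ T', z i :=
    Finset.sum_lt_sum_of_nonempty hne (fun i hi => hT i (hT'sub hi))
  rw [Finset.sum_const, hT'card, nsmul_eq_mul] at h1
  have h2 : ∑ i ∈ T', z i ≤ 1 := hz.2 T'
  have h3 := one_lt_succ_mul_aa (m := m) hm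
  push_cast at h1
  linarith

lemma big_finite (hm : 1 ≤ m) {z : X → ℝ} (hz : z ∈ Bplus X) :
    Set.Finite {i | aa m < z i} := by
  by_contra h
  obtain ⟨T, hTsub, hTcard⟩ := Set.Infinite.exists_subset_card_eq h (m+1)
  have := card_le_of_big hm hz T (fun i hi => hTsub hi)
  omega

lemma mem_Fz (hm : 1 ≤ m) {z : X → ℝ} (hz : z ∈ Bplus X) (i : X) :
    i ∈ Fz m z ↔ aa m < z i := by
  unfold Fz
  rw [dif_pos (big_finite hm hz)]
  simp

lemma Fz_card (hm : 1 ≤ m) {z : X → ℝ} (hz : z ∈ Bplus X) : (Fz m z).card ≤ m :=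
  card_le_of_big hm hz _ (fun i hi => (mem_Fz hm hz i).mp hi)

lemma wt_nonneg (S A : Finset X) (z : X → ℝ) : 0 ≤ wt m S A z := by
  unfold wt
  apply mul_nonneg
  · exact Finset.prod_nonneg fun i _ => gg_nonneg _
  · exact Finset.prod_nonneg fun i _ => by have := gg_le_one (m := m) (z i); linarith

lemma sum_wt (S : Finset X) (z : X → ℝ) : ∑ A ∈ S.powerset, wt m S A z = 1 := by
  have h := Finset.prod_add (fun i => gg m (z i)) (fun i => 1 - gg m (z i)) S
  simp only [add_sub_cancel] at h
  unfold wt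
  rw [← h]
  simp

lemma wt_eq_zero_of_card (hm : 1 ≤ m) {z : X → ℝ} (hz : z ∈ Bplus X) {A : Finset X}
    (hA : ¬ A.card ≤ m) (S : Finset X) : wt m S A z = 0 := by
  have : ¬ ∀ i ∈ A, aa m < z i := fun h => hA (card_le_of_big hm hz A h)
  push_neg at this
  obtain ⟨i, hiA, hi⟩ := this
  unfold wt
  rw [Finset.prod_eq_zero hiA (gg_of_le hm hi)]
  ring

/-- stability of `Phi` under enlarging `S` by small coordinates -/
lemma Phi_stable (f : BoundedContinuousFunction (Sm X m) ℝ) {S T : Finset X} (hST : S ⊆ T)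
    {z : X → ℝ} (hsmall : ∀ i ∈ T, i ∉ S → gg m (z i) = 0) :
    Phi m f T z = Phi m f S z := by
  unfold Phi
  rw [← Finset.sum_subset (Finset.powerset_mono.mpr hST)]
  · apply Finset.sum_congr rfl
    intro A hA
    rw [Finset.mem_powerset] at hA
    congr 1
    unfold wt
    congr 1
    apply (Finset.prod_subset (Finset.sdiff_subset_sdiff hST (le_refl A)) ?_).symm
    intro i hiT hiS
    rw [Finset.mem_sdiff] at hiT hiS
    have hi : i ∉ S := fun h => hiS ⟨h, hiT.2⟩
    rw [hsmall i hiT.1 hi]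
    ring
  · intro A hA hAS
    rw [Finset.mem_powerset] at hA hAS
    have : ∃ i ∈ A, i ∉ S := by
      by_contra h
      push_neg at h
      exact hAS h
    obtain ⟨i, hiA, hiS⟩ := this
    unfold wt
    rw [Finset.prod_eq_zero hiA (hsmall i (hA hiA) hiS)]
    ring

lemma vl_abs_le (f : BoundedContinuousFunction (Sm X m) ℝ) (A : Finset X) :
    |vl m f A| ≤ ‖f‖ := by
  unfold vl
  split
  · exact f.norm_coe_le_norm _
  · simp [norm_nonneg]

/-- `Rf` agrees with `Phi` over any finite superset of `Fz` -/
lemma Rf_eq_Phi (hm : 1 ≤ m) (f : BoundedContinuousFunction (Sm X m) ℝ) {z : X → ℝ}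
    (hz : z ∈ Bplus X) {T : Finset X} (hT : Fz m z ⊆ T) :
    Rf m f z = Phi m f T z := by
  unfold Rf
  refine (Phi_stable f hT ?_).symm
  intro i _ hi
  rw [mem_Fz hm hz] at hi
  exact gg_of_le hm (not_lt.mp hi)

/-- bound on `Phi` -/
lemma Phi_abs_le (f : BoundedContinuousFunction (Sm X m) ℝ) (S : Finset X) (z : X → ℝ) :
    |Phi m f S z| ≤ ‖f‖ := by
  unfold Phi
  calc |∑ A ∈ S.powerset, wt m S A z * vl m f A| ≤ ∑ A ∈ S.powerset, |wt m S A z * vl m f A| :=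
        Finset.abs_sum_le_sum_abs _ _
    _ ≤ ∑ A ∈ S.powerset, wt m S A z * ‖f‖ := by
        apply Finset.sum_le_sum
        intro A _
        rw [abs_mul, abs_of_nonneg (wt_nonneg _ _ _)]
        exact mul_le_mul_of_nonneg_left (vl_abs_le f A) (wt_nonneg _ _ _)
    _ = ‖f‖ := by rw [← Finset.sum_mul, sum_wt, one_mul]

/-- summation over the powerset of `insert j S` -/
lemma sum_wt_insert {j : X} {S : Finset X} (hj : j ∉ S) (v : Finset X → ℝ) (z : X → ℝ) :
    ∑ A ∈ (insert j S).powerset, wt m (insert j S) A z * v A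
      = ∑ A ∈ S.powerset, wt m S A z * ((1 - gg m (z j)) * v A + gg m (z j) * v (insert j A)) := by
  rw [Finset.powerset_insert, Finset.sum_union, Finset.sum_image]
  · have h1 : ∀ A ∈ S.powerset, wt m (insert j S) A z = (1 - gg m (z j)) * wt m S A z := by
      intro A hA
      rw [Finset.mem_powerset] at hA
      have hjA : j ∉ A := fun h => hj (hA h)
      unfold wt
      rw [Finset.insert_sdiff_of_notMem _ hjA, Finset.prod_insert]
      · ring
      · rw [Finset.mem_sdiff]; exact fun h => hj h.1
    have h2 : ∀ A ∈ S.powerset, wt m (insert j S) (insert j A) z = gg m (z j) * wt m S A z := by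
      intro A hA
      rw [Finset.mem_powerset] at hA
      have hjA : j ∉ A := fun h => hj (hA h)
      unfold wt
      rw [Finset.prod_insert hjA, Finset.insert_sdiff_insert]
      have : S \ insert j A = S \ A := by
        ext i
        simp only [Finset.mem_sdiff, Finset.mem_insert]
        constructor
        · rintro ⟨hiS, hi⟩; exact ⟨hiS, fun h => hi (Or.inr h)⟩
        · rintro ⟨hiS, hi⟩
          refine ⟨hiS, ?_⟩
          rintro (rfl | h)
          · exact hj hiS
          · exact hi h
      rw [this]
      ring
    rw [← Finset.sum_add_distrib]
    apply Finset.sum_congr rfl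
    intro A hA
    rw [h1 A hA, h2 A hA]
    ring
  · intro A hA B hB hAB
    simp only [Finset.mem_coe, Finset.mem_powerset] at hA hB
    have : ∀ C : Finset X, C ⊆ S → (insert j C).erase j = C := by
      intro C hC
      rw [Finset.erase_insert (fun h => hj (hC h))]
    rw [← this A hA, ← this B hB, hAB]
  · rw [Finset.disjoint_left]
    intro A hA hA2
    rw [Finset.mem_powerset] at hA
    rw [Finset.mem_image] at hA2
    obtain ⟨B, _, rfl⟩ := hA2
    exact hj (hA (Finset.mem_insert_self j B))

/-- the marginal identity -/
lemma sum_wt_union_marginal {N : Finset X} (v : Finset X → ℝ)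
    (hv : ∀ j, j ∉ N → ∀ A, v (insert j A) = v A) (z : X → ℝ) :
    ∀ (K : Finset X), Disjoint N K →
      ∑ A ∈ (N ∪ K).powerset, wt m (N ∪ K) A z * v A
        = ∑ B ∈ N.powerset, wt m N B z * v B := by
  intro K
  induction K using Finset.induction_on with
  | empty => intro _; rw [Finset.union_empty]
  | @insert j K hjK ih =>
      intro hdisj
      have hdisjK : Disjoint N K := Finset.disjoint_insert_right.mp hdisj |>.2
      have hjN : j ∉ N := fun h =>
        (Finset.disjoint_insert_right.mp hdisj).1 h
      have hjNK : j ∉ N ∪ K := by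
        rw [Finset.mem_union]; rintro (h | h); exacts [hjN h, hjK h]
      rw [Finset.union_insert, sum_wt_insert hjNK v z]
      rw [← ih hdisjK]
      apply Finset.sum_congr rfl
      intro A hA
      rw [hv j hjN A]
      ring

lemma Sm_coords {z : X → ℝ} (hz : z ∈ Sm X m) (i : X) : z i = 0 ∨ z i = (m:ℝ)⁻¹ := by
  obtain ⟨A, _, rfl⟩ := hz
  by_cases h : i ∈ A <;> simp [h]

lemma Sm_isClosed : IsClosed (Sm X m) := by
  have hset : Sm X m = {z : X → ℝ | ∀ i, z i = 0 ∨ z i = (m:ℝ)⁻¹} ∩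
      {z : X → ℝ | ∀ T : Finset X, (∀ i ∈ T, z i ≠ 0) → T.card ≤ m} := by
    ext z
    constructor
    · rintro ⟨A, hcard, rfl⟩
      constructor
      · intro i; by_cases h : i ∈ A <;> simp [h]
      · intro T hT
        have hsub : T ⊆ A := by
          intro i hi
          have := hT i hi
          by_contra h
          simp [h] at this
        exact le_trans (Finset.card_le_card hsub) hcard
    · rintro ⟨h1, h2⟩
      have hfin : Set.Finite {i | z i ≠ 0} := by
        by_contra h
        obtain ⟨T, hTsub, hTcard⟩ := Set.Infinite.exists_subset_card_eq h (m+1)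
        have := h2 T (fun i hi => hTsub hi)
        omega
      refine ⟨hfin.toFinset, ?_, ?_⟩
      · apply h2
        intro i hi
        exact (Set.Finite.mem_toFinset hfin).mp hi
      · funext i
        by_cases h : i ∈ hfin.toFinset
        · rw [if_pos h]
          rcases h1 i with h0 | h0
          · exact absurd h0 ((Set.Finite.mem_toFinset hfin).mp h)
          · exact h0
        · rw [if_neg h]
          by_contra hne
          exact h ((Set.Finite.mem_toFinset hfin).mpr hne)
  rw [hset]
  apply IsClosed.inter
  · have : {z : X → ℝ | ∀ i, z i = 0 ∨ z i = (m:ℝ)⁻¹}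
        = ⋂ i, (fun z : X → ℝ => z i) ⁻¹' ({0, (m:ℝ)⁻¹} : Set ℝ) := by
      ext z; simp [Set.mem_iInter]
    rw [this]
    apply isClosed_iInter
    intro i
    apply IsClosed.preimage (continuous_apply i)
    exact Set.Finite.isClosed (Set.toFinite _)
  · have : {z : X → ℝ | ∀ T : Finset X, (∀ i ∈ T, z i ≠ 0) → T.card ≤ m}
        = ⋂ T : Finset X, {z : X → ℝ | (∀ i ∈ T, z i ≠ 0) → T.card ≤ m} := by
      ext z; simp [Set.mem_iInter]
    rw [this]
    apply isClosed_iInter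
    intro T
    by_cases hT : T.card ≤ m
    · have : {z : X → ℝ | (∀ i ∈ T, z i ≠ 0) → T.card ≤ m} = Set.univ := by
        ext z; simp [hT]
      rw [this]; exact isClosed_univ
    · have : {z : X → ℝ | (∀ i ∈ T, z i ≠ 0) → T.card ≤ m}
          = ⋃ i ∈ T, (fun z : X → ℝ => z i) ⁻¹' ({0} : Set ℝ) := by
        ext z
        simp only [Set.mem_setOf_eq, Set.mem_iUnion, Set.mem_preimage, Set.mem_singleton_iff]
        constructor
        · intro h
          by_contra hc
          push_neg at hc
          exact hT (h (fun i hi => hc i hi))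
        · rintro ⟨i, hi, h0⟩ h
          exact absurd h0 (h i hi)
      rw [this]
      apply isClosed_biUnion_finset
      intro i _
      exact IsClosed.preimage (continuous_apply i) isClosed_singleton

lemma Sm_isCompact : IsCompact (Sm X m) := by
  apply IsCompact.of_isClosed_subset ?_ Sm_isClosed
  · intro z hz
    show z ∈ Set.pi Set.univ fun _ : X => Set.Icc (0:ℝ) (m:ℝ)⁻¹
    intro i _
    rcases Sm_coords hz i with h | h <;> rw [h]
    · exact Set.left_mem_Icc.mpr (by positivity)
    · exact Set.right_mem_Icc.mpr (by positivity)
  exact isCompact_univ_pi (fun i => isCompact_Icc)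

/-- key uniform continuity statement extracted by compactness -/
lemma unif (hm : 1 ≤ m) (f : BoundedContinuousFunction (Sm X m) ℝ) {δ : ℝ} (hδ : 0 < δ) :
    ∃ E : Finset X, ∀ y y' : Sm X m,
      (∀ i ∈ E, (y : X → ℝ) i = (y' : X → ℝ) i) → |f y - f y'| < δ := by
  have hm' : (0:ℝ) < m := by exact_mod_cast hm
  have key : ∀ x : Sm X m, ∃ I : Finset X, ∀ y : Sm X m,
      (∀ i ∈ I, (y : X → ℝ) i = (x : X → ℝ) i) → |f y - f x| < δ/2 := by
    intro x
    have hopen : IsOpen {y : Sm X m | |f y - f x| < δ/2} := by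
      have : {y : Sm X m | |f y - f x| < δ/2}
          = (fun y => |f y - f x|) ⁻¹' (Set.Iio (δ/2)) := rfl
      rw [this]
      exact isOpen_Iio.preimage ((f.continuous.sub continuous_const).abs)
    rw [isOpen_induced_iff] at hopen
    obtain ⟨U, hU, hUeq⟩ := hopen
    have hxU : (x : X → ℝ) ∈ U := by
      have : x ∈ {y : Sm X m | |f y - f x| < δ/2} := by
        simp only [Set.mem_setOf_eq, sub_self, abs_zero]
        positivity
      rw [← hUeq] at this
      exact this
    obtain ⟨I, u, hu, hsub⟩ := isOpen_pi_iff.mp hU (x : X → ℝ) hxU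
    refine ⟨I, fun y hy => ?_⟩
    have : (y : X → ℝ) ∈ U := by
      apply hsub
      intro i hi
      rw [hy i hi]
      exact (hu i hi).2
    have : y ∈ Subtype.val ⁻¹' U := this
    rw [hUeq] at this
    exact this
  choose I hI using key
  set O : Sm X m → Set (X → ℝ) :=
    fun x => {y : X → ℝ | ∀ i ∈ I x, |y i - (x : X → ℝ) i| < (2*m:ℝ)⁻¹} with hO
  have hOopen : ∀ x, IsOpen (O x) := by
    intro x
    have : O x = ⋂ i ∈ I x, (fun y : X → ℝ => y i) ⁻¹' Metric.ball ((x : X → ℝ) i) (2*m:ℝ)⁻¹ := by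
      ext y
      simp [hO, Real.dist_eq]
    rw [this]
    apply isOpen_biInter_finset
    intro i _
    exact Metric.isOpen_ball.preimage (continuous_apply i)
  have hcover : Sm X m ⊆ ⋃ x : Sm X m, O x := by
    intro z hz
    refine Set.mem_iUnion.mpr ⟨⟨z, hz⟩, ?_⟩
    intro i _
    simp only [sub_self, abs_zero]
    positivity
  obtain ⟨t, ht⟩ := Sm_isCompact.elim_finite_subcover O hOopen hcover
  refine ⟨t.sup I, fun y y' hyy' => ?_⟩
  obtain ⟨x, hxt, hyO⟩ := Set.mem_iUnion₂.mp (ht y.2)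
  have hcoord : ∀ (u v : ℝ), (u = 0 ∨ u = (m:ℝ)⁻¹) → (v = 0 ∨ v = (m:ℝ)⁻¹) →
      |u - v| < (2*m:ℝ)⁻¹ → u = v := by
    intro u v hu hv h
    have h1 : (2*m:ℝ)⁻¹ < (m:ℝ)⁻¹ := by
      rw [inv_lt_inv₀ (by linarith) (by linarith)]
      linarith
    rcases hu with rfl | rfl <;> rcases hv with rfl | rfl
    · rfl
    · exfalso; rw [zero_sub, abs_neg, abs_of_nonneg (by positivity)] at h; linarith
    · exfalso; rw [sub_zero, abs_of_nonneg (by positivity)] at h; linarith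
    · rfl
  have hyx : ∀ i ∈ I x, (y : X → ℝ) i = (x : X → ℝ) i := by
    intro i hi
    exact hcoord _ _ (Sm_coords y.2 i) (Sm_coords x.2 i) (hyO i hi)
  have hy'x : ∀ i ∈ I x, (y' : X → ℝ) i = (x : X → ℝ) i := by
    intro i hi
    rw [← hyy' i (Finset.le_iff_subset.mp (Finset.le_sup hxt) hi)]
    exact hyx i hi
  have h1 := hI x y hyx
  have h2 := hI x y' hy'x
  have h3 : |f y - f y'| ≤ |f y - f x| + |f x - f y'| := abs_sub_le _ _ _
  rw [abs_sub_comm (f x) (f y')] at h3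
  linarith

lemma wt_eq_prod {S A : Finset X} (hA : A ⊆ S) (z : X → ℝ) :
    wt m S A z = ∏ i ∈ S, (if i ∈ A then gg m (z i) else 1 - gg m (z i)) := by
  unfold wt
  conv_rhs => rw [← Finset.union_sdiff_of_subset hA]
  rw [Finset.prod_union Finset.disjoint_sdiff]
  congr 1
  · exact (Finset.prod_congr rfl fun i hi => by rw [if_pos hi]).symm
  · exact (Finset.prod_congr rfl fun i hi => by rw [if_neg (Finset.mem_sdiff.mp hi).2]).symm

lemma abs_prod_sub_prod_le {s : Finset X} (a b : X → ℝ) :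
    (∀ i ∈ s, 0 ≤ a i ∧ a i ≤ 1) → (∀ i ∈ s, 0 ≤ b i ∧ b i ≤ 1) →
    |∏ i ∈ s, a i - ∏ i ∈ s, b i| ≤ ∑ i ∈ s, |a i - b i| := by
  induction s using Finset.induction_on with
  | empty => intro _ _; simp
  | @insert j s hj ih =>
      intro ha hb
      have ha' : ∀ i ∈ s, 0 ≤ a i ∧ a i ≤ 1 := fun i hi => ha i (Finset.mem_insert_of_mem hi)
      have hb' : ∀ i ∈ s, 0 ≤ b i ∧ b i ≤ 1 := fun i hi => hb i (Finset.mem_insert_of_mem hi)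
      have hpa0 : 0 ≤ ∏ i ∈ s, a i := Finset.prod_nonneg fun i hi => (ha' i hi).1
      have hpa1 : ∏ i ∈ s, a i ≤ 1 := Finset.prod_le_one (fun i hi => (ha' i hi).1)
        (fun i hi => (ha' i hi).2)
      have hbj := hb j (Finset.mem_insert_self j s)
      rw [Finset.prod_insert hj, Finset.prod_insert hj, Finset.sum_insert hj]
      have key : a j * ∏ i ∈ s, a i - b j * ∏ i ∈ s, b i
          = (a j - b j) * ∏ i ∈ s, a i + b j * (∏ i ∈ s, a i - ∏ i ∈ s, b i) := by ring
      rw [key]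
      calc |(a j - b j) * ∏ i ∈ s, a i + b j * (∏ i ∈ s, a i - ∏ i ∈ s, b i)|
          ≤ |(a j - b j) * ∏ i ∈ s, a i| + |b j * (∏ i ∈ s, a i - ∏ i ∈ s, b i)| := abs_add_le _ _
        _ = |a j - b j| * |∏ i ∈ s, a i| + |b j| * |∏ i ∈ s, a i - ∏ i ∈ s, b i| := by
            rw [abs_mul, abs_mul]
        _ ≤ |a j - b j| * 1 + 1 * (∑ i ∈ s, |a i - b i|) := by
            apply add_le_add
            · exact mul_le_mul_of_nonneg_left (by rw [abs_of_nonneg hpa0]; exact hpa1)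
                (abs_nonneg _)
            · apply mul_le_mul
              · rw [abs_of_nonneg hbj.1]; exact hbj.2
              · exact ih ha' hb'
              · exact abs_nonneg _
              · norm_num
        _ = |a j - b j| + ∑ i ∈ s, |a i - b i| := by ring

lemma wt_diff_le (hm : 1 ≤ m) {N A : Finset X} (hA : A ⊆ N) {z z' : X → ℝ} {η : ℝ}
    (hz : ∀ i ∈ N, |z' i - z i| ≤ η) :
    |wt m N A z' - wt m N A z| ≤ N.card * (η / ((m:ℝ)⁻¹ - aa m)) := by
  have hd : 0 < (m:ℝ)⁻¹ - aa m := by have := aa_lt_inv (m := m) hm; linarith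
  rw [wt_eq_prod hA, wt_eq_prod hA]
  have hgb : ∀ t : ℝ, 0 ≤ gg m t ∧ gg m t ≤ 1 := fun t => ⟨gg_nonneg t, gg_le_one t⟩
  calc |∏ i ∈ N, (if i ∈ A then gg m (z' i) else 1 - gg m (z' i))
        - ∏ i ∈ N, (if i ∈ A then gg m (z i) else 1 - gg m (z i))|
      ≤ ∑ i ∈ N, |(if i ∈ A then gg m (z' i) else 1 - gg m (z' i))
          - (if i ∈ A then gg m (z i) else 1 - gg m (z i))| := by
        apply abs_prod_sub_prod_le
        · intro i _; split
          · exact hgb _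
          · constructor
            · have := (hgb (z' i)).2; linarith
            · have := (hgb (z' i)).1; linarith
        · intro i _; split
          · exact hgb _
          · constructor
            · have := (hgb (z i)).2; linarith
            · have := (hgb (z i)).1; linarith
    _ ≤ ∑ _i ∈ N, η / ((m:ℝ)⁻¹ - aa m) := by
        apply Finset.sum_le_sum
        intro i hi
        have hgg : |gg m (z' i) - gg m (z i)| ≤ η / ((m:ℝ)⁻¹ - aa m) := by
          refine (gg_lip hm _ _).trans ?_
          exact (div_le_div_iff_of_pos_right hd).mpr (hz i hi)
        split
        · exact hgg
        · have : (1 - gg m (z' i)) - (1 - gg m (z i)) = -(gg m (z' i) - gg m (z i)) := by ring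
          rw [this, abs_neg]
          exact hgg
    _ = N.card * (η / ((m:ℝ)⁻¹ - aa m)) := by
        rw [Finset.sum_const, nsmul_eq_mul]

theorem Rf_continuous (hm : 1 ≤ m) (f : BoundedContinuousFunction (Sm X m) ℝ) :
    Continuous fun z : Bplus X => Rf m f (z : X → ℝ) := by
  have hd : 0 < (m:ℝ)⁻¹ - aa m := by have := aa_lt_inv (m := m) hm; linarith
  rw [continuous_iff_continuousAt]
  intro z0
  rw [ContinuousAt, Metric.tendsto_nhds]
  intro δ hδ
  have hδ1 : 0 < δ/3 := by linarith
  obtain ⟨E, hE⟩ := unif hm f hδ1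
  set N : Finset X := Fz m (z0 : X → ℝ) ∪ E with hN
  set M : ℝ := 2^(N.card) * (N.card * ((‖f‖ + 1) / ((m:ℝ)⁻¹ - aa m))) with hM
  have hM0 : 0 ≤ M := by
    rw [hM]
    have : (0:ℝ) ≤ ‖f‖ + 1 := by positivity
    positivity
  set η : ℝ := (δ/3) / (M + 1) with hη
  have hηpos : 0 < η := by rw [hη]; positivity
  have hMη : M * η ≤ δ/3 := by
    rw [hη]
    rw [mul_div_assoc']
    rw [div_le_iff₀ (by linarith)]
    nlinarith
  -- the neighbourhood event
  have hev : ∀ᶠ z' : Bplus X in nhds z0, ∀ i ∈ N, |(z' : X → ℝ) i - (z0 : X → ℝ) i| ≤ η := by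
    rw [Filter.eventually_all_finset]
    intro i _
    have hcont : Filter.Tendsto (fun z' : Bplus X => (z' : X → ℝ) i) (nhds z0)
        (nhds ((z0 : X → ℝ) i)) :=
      ((continuous_apply i).comp continuous_subtype_val).continuousAt
    have := Metric.tendsto_nhds.mp hcont η hηpos
    filter_upwards [this] with z' hz'
    rw [Real.dist_eq] at hz'
    exact le_of_lt hz'
  filter_upwards [hev] with z' hz'
  rw [Real.dist_eq]
  -- main estimate
  set zv : X → ℝ := (z' : X → ℝ) with hzv
  set z0v : X → ℝ := (z0 : X → ℝ) with hz0v
  set K : Finset X := Fz m zv \ N with hK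
  have hTNK : N ∪ Fz m zv = N ∪ K := by rw [hK, Finset.union_sdiff_self_eq_union]
  -- Step A and B
  have hA : Rf m f z0v = Phi m f N z0v := Rf_eq_Phi hm f z0.2 Finset.subset_union_left
  have hB : Rf m f zv = Phi m f (N ∪ K) zv := by
    rw [← hTNK]; exact Rf_eq_Phi hm f z'.2 Finset.subset_union_right
  -- Step D : marginal identity
  have hdisj : Disjoint N K := Finset.disjoint_sdiff
  have hD : ∑ A ∈ (N ∪ K).powerset, wt m (N ∪ K) A zv * vl m f (A ∩ N) = Phi m f N zv := by
    rw [sum_wt_union_marginal (fun A => vl m f (A ∩ N))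
      (fun j hj A => by show vl m f (insert j A ∩ N) = vl m f (A ∩ N); rw [Finset.insert_inter_of_notMem hj]) zv K hdisj]
    unfold Phi
    apply Finset.sum_congr rfl
    intro B hB
    rw [Finset.mem_powerset] at hB
    rw [Finset.inter_eq_left.mpr hB]
  -- Step E : per-term comparison
  have hEE : |Phi m f (N ∪ K) zv - Phi m f N zv| ≤ δ/3 := by
    rw [← hD]
    unfold Phi
    rw [← Finset.sum_sub_distrib]
    calc |∑ A ∈ (N ∪ K).powerset,
        (wt m (N ∪ K) A zv * vl m f A - wt m (N ∪ K) A zv * vl m f (A ∩ N))|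
        ≤ ∑ A ∈ (N ∪ K).powerset,
          |wt m (N ∪ K) A zv * vl m f A - wt m (N ∪ K) A zv * vl m f (A ∩ N)| :=
          Finset.abs_sum_le_sum_abs _ _
      _ ≤ ∑ A ∈ (N ∪ K).powerset, wt m (N ∪ K) A zv * (δ/3) := by
          apply Finset.sum_le_sum
          intro A _
          by_cases hAcard : A.card ≤ m
          · rw [← mul_sub, abs_mul, abs_of_nonneg (wt_nonneg _ _ _)]
            apply mul_le_mul_of_nonneg_left ?_ (wt_nonneg _ _ _)
            have hANcard : (A ∩ N).card ≤ m :=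
              le_trans (Finset.card_le_card Finset.inter_subset_left) hAcard
            unfold vl
            rw [dif_pos hAcard, dif_pos hANcard]
            apply le_of_lt
            apply hE
            intro i hiE
            have hiN : i ∈ N := Finset.mem_union_right _ hiE
            show pt X m A i = pt X m (A ∩ N) i
            unfold pt
            by_cases hiA : i ∈ A
            · rw [if_pos hiA, if_pos (Finset.mem_inter.mpr ⟨hiA, hiN⟩)]
            · rw [if_neg hiA, if_neg (fun h => hiA (Finset.mem_inter.mp h).1)]
          · rw [wt_eq_zero_of_card (z := zv) hm z'.2 hAcard]
            simp
      _ = δ/3 := by rw [← Finset.sum_mul, sum_wt, one_mul]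
  -- Step F
  have hF : |Phi m f N zv - Phi m f N z0v| ≤ M * η := by
    unfold Phi
    rw [← Finset.sum_sub_distrib]
    calc |∑ B ∈ N.powerset, (wt m N B zv * vl m f B - wt m N B z0v * vl m f B)|
        ≤ ∑ B ∈ N.powerset, |(wt m N B zv - wt m N B z0v) * vl m f B| := by
          refine (Finset.abs_sum_le_sum_abs _ _).trans ?_
          apply le_of_eq
          apply Finset.sum_congr rfl
          intro B _
          congr 1
          ring
      _ ≤ ∑ _B ∈ N.powerset, (N.card * (η / ((m:ℝ)⁻¹ - aa m))) * (‖f‖ + 1) := by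
          apply Finset.sum_le_sum
          intro B hB
          rw [Finset.mem_powerset] at hB
          rw [abs_mul]
          apply mul_le_mul (wt_diff_le hm hB hz') ?_ (abs_nonneg _) ?_
          · exact (vl_abs_le f B).trans (by linarith)
          · positivity
      _ ≤ M * η := by
          rw [Finset.sum_const, Finset.card_powerset, nsmul_eq_mul, hM]
          apply le_of_eq
          push_cast
          field_simp
  have htotal : |Rf m f zv - Rf m f z0v| ≤ δ/3 + M * η := by
    rw [hA, hB]
    calc |Phi m f (N ∪ K) zv - Phi m f N z0v|
        ≤ |Phi m f (N ∪ K) zv - Phi m f N zv| + |Phi m f N zv - Phi m f N z0v| :=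
          abs_sub_le _ _ _
      _ ≤ δ/3 + M * η := add_le_add hEE hF
  calc |Rf m f zv - Rf m f z0v| ≤ δ/3 + M * η := htotal
    _ ≤ δ/3 + δ/3 := by linarith
    _ < δ := by linarith

lemma Rf_abs_le (f : BoundedContinuousFunction (Sm X m) ℝ) (z : X → ℝ) :
    |Rf m f z| ≤ ‖f‖ := Phi_abs_le f _ z

lemma vl_add (f g : BoundedContinuousFunction (Sm X m) ℝ) (A : Finset X) :
    vl m (f + g) A = vl m f A + vl m g A := by
  unfold vl
  split <;> simp

lemma vl_smul (c : ℝ) (f : BoundedContinuousFunction (Sm X m) ℝ) (A : Finset X) :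
    vl m (c • f) A = c * vl m f A := by
  unfold vl
  split <;> simp

lemma Rf_add (f g : BoundedContinuousFunction (Sm X m) ℝ) (z : X → ℝ) :
    Rf m (f + g) z = Rf m f z + Rf m g z := by
  unfold Rf Phi
  rw [← Finset.sum_add_distrib]
  apply Finset.sum_congr rfl
  intro A _
  rw [vl_add]
  ring

lemma Rf_smul (c : ℝ) (f : BoundedContinuousFunction (Sm X m) ℝ) (z : X → ℝ) :
    Rf m (c • f) z = c * Rf m f z := by
  unfold Rf Phi
  rw [Finset.mul_sum]
  apply Finset.sum_congr rfl
  intro A _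
  rw [vl_smul]
  ring

lemma Rf_nonneg (f : BoundedContinuousFunction (Sm X m) ℝ) (hf : ∀ x, 0 ≤ f x) (z : X → ℝ) :
    0 ≤ Rf m f z := by
  unfold Rf Phi
  apply Finset.sum_nonneg
  intro A _
  apply mul_nonneg (wt_nonneg _ _ _)
  unfold vl
  split
  · exact hf _
  · exact le_refl 0

lemma Rf_const (hm : 1 ≤ m) {z : X → ℝ} (hzB : z ∈ Bplus X) (c : ℝ) :
    Rf m (BoundedContinuousFunction.const (Sm X m) c) z = c := by
  unfold Rf Phi
  have : ∀ A ∈ (Fz m z).powerset,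
      wt m (Fz m z) A z * vl m (BoundedContinuousFunction.const (Sm X m) c) A
        = wt m (Fz m z) A z * c := by
    intro A hA
    rw [Finset.mem_powerset] at hA
    have hcard : A.card ≤ m := le_trans (Finset.card_le_card hA) (Fz_card hm hzB)
    unfold vl
    rw [dif_pos hcard]
    simp
  rw [Finset.sum_congr rfl this, ← Finset.sum_mul, sum_wt, one_mul]

lemma Rf_restrict (hm : 1 ≤ m) (f : BoundedContinuousFunction (Sm X m) ℝ) {z : X → ℝ}
    (hzB : z ∈ Bplus X) (hz : z ∈ Sm X m) : Rf m f z = f ⟨z, hz⟩ := by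
  obtain ⟨A, hcard, hzeq⟩ := id hz
  have hzpt : z = pt X m A := hzeq
  subst hzpt
  have hFz : Fz m (pt X m A) = A := by
    ext i
    rw [mem_Fz hm hzB]
    unfold pt
    by_cases h : i ∈ A
    · rw [if_pos h]
      simp only [h, iff_true]
      exact aa_lt_inv hm
    · rw [if_neg h]
      simp only [h, iff_false, not_lt]
      exact le_of_lt (aa_pos hm)
  unfold Rf Phi
  rw [hFz]
  rw [Finset.sum_eq_single A]
  · have h1 : wt m A A (pt X m A) = 1 := by
      unfold wt
      rw [Finset.sdiff_self, Finset.prod_empty, mul_one]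
      apply Finset.prod_eq_one
      intro i hi
      apply gg_of_ge hm
      unfold pt
      rw [if_pos hi]
    rw [h1, one_mul]
    unfold vl
    rw [dif_pos hcard]
  · intro B hB hBA
    rw [Finset.mem_powerset] at hB
    have : ∃ i ∈ A, i ∉ B := by
      by_contra h
      push_neg at h
      exact hBA (Finset.Subset.antisymm hB h)
    obtain ⟨i, hiA, hiB⟩ := this
    unfold wt
    have : 1 - gg m (pt X m A i) = 0 := by
      rw [gg_of_ge hm (by unfold pt; rw [if_pos hiA])]
      ring
    rw [Finset.prod_eq_zero (Finset.mem_sdiff.mpr ⟨hiA, hiB⟩) this]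
    ring
  · intro h
    exact absurd (Finset.mem_powerset_self A) h

end Aux

open BoundedContinuousFunction

/-- For each `m ≥ 1` there is a regular extension operator `R : C(S_m) → C(B_1^+)`:
a bounded linear operator of norm one, positive, preserving constants, with
`R(f)|_{S_m} = f`. -/
theorem exists_regular_extension_operator (X : Type*) [DecidableEq X] (m : ℕ) (hm : 1 ≤ m) :
    ∃ R : BoundedContinuousFunction (Sm X m) ℝ →L[ℝ] BoundedContinuousFunction (Bplus X) ℝ,
      ‖R‖ = 1 ∧
      (∀ f : BoundedContinuousFunction (Sm X m) ℝ, (∀ x, 0 ≤ f x) → ∀ y, 0 ≤ R f y) ∧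
      (∀ c : ℝ, R (BoundedContinuousFunction.const _ c) = BoundedContinuousFunction.const _ c) ∧
      (∀ (f : BoundedContinuousFunction (Sm X m) ℝ) (z : Bplus X)
        (hz : (z : X → ℝ) ∈ Sm X m), R f z = f ⟨z, hz⟩) := by
  classical
  have hBne : Nonempty (Bplus X) := ⟨⟨fun _ => 0, fun i => le_refl 0, fun s => by simp⟩⟩
  have hSne : Nonempty (Sm X m) := ⟨⟨pt X m ∅, pt_mem_Sm (by simp)⟩⟩
  -- the underlying linear map
  let L : BoundedContinuousFunction (Sm X m) ℝ →ₗ[ℝ] BoundedContinuousFunction (Bplus X) ℝ :=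
    { toFun := fun f => ofNormedAddCommGroup (fun z : Bplus X => Rf m f (z : X → ℝ))
        (Rf_continuous hm f) ‖f‖ (fun z => by
          rw [Real.norm_eq_abs]; exact Rf_abs_le f _)
      map_add' := fun f g => by
        ext z
        simp only [coe_ofNormedAddCommGroup, coe_add, Pi.add_apply]
        exact Rf_add f g _
      map_smul' := fun c f => by
        ext z
        simp only [coe_ofNormedAddCommGroup, coe_smul, Pi.smul_apply, RingHom.id_apply,
          smul_eq_mul]
        exact Rf_smul c f _ }
  have hLapply : ∀ (f : BoundedContinuousFunction (Sm X m) ℝ) (z : Bplus X),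
      L f z = Rf m f (z : X → ℝ) := fun f z => rfl
  let R : BoundedContinuousFunction (Sm X m) ℝ →L[ℝ] BoundedContinuousFunction (Bplus X) ℝ :=
    L.mkContinuous 1 (fun f => by
      rw [one_mul]
      exact norm_ofNormedAddCommGroup_le _ (norm_nonneg f)
        (fun z => by rw [Real.norm_eq_abs]; exact Rf_abs_le f _))
  have hRapply : ∀ (f : BoundedContinuousFunction (Sm X m) ℝ) (z : Bplus X),
      R f z = Rf m f (z : X → ℝ) := fun f z => rfl
  have hconst : ∀ c : ℝ, R (const (Sm X m) c) = const (Bplus X) c := by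
    intro c
    ext z
    rw [hRapply, const_apply]
    exact Rf_const hm z.2 c
  refine ⟨R, ?_, ?_, hconst, ?_⟩
  · -- norm one
    apply le_antisymm
    · exact LinearMap.mkContinuous_norm_le L zero_le_one _
    · have h1 : ‖R (const (Sm X m) (1:ℝ))‖ = 1 := by
        rw [hconst, norm_const_eq]
        norm_num
      have h2 : ‖const (Sm X m) (1:ℝ)‖ = 1 := by
        rw [norm_const_eq]; norm_num
      have := R.le_opNorm (const (Sm X m) (1:ℝ))
      rw [h1, h2, mul_one] at this
      exact this
  · -- positivity
    intro f hf y
    rw [hRapply]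
    exact Rf_nonneg f hf _
  · -- restriction
    intro f z hz
    rw [hRapply]
    exact Rf_restrict hm f z.2 hz
end
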